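/- arXiv:1903.11582 — 6 statements merged into one kernel-verified Lean document; each statement's English description precedes it below -/
import Mathlib

section
/- Let y₁, y₂ ∈ ℝᵖ and let λ₁, λ₂ ∈ ℝᵖ each have nonnegative nondecreasing entries. Then ‖Prox_{λ₁}(y₁) − Prox_{λ₂}(y₂)‖ ≤ 2(‖λ₁ − λ₂‖ + ‖y₁ − y₂‖), where ‖·‖ is the Euclidean norm on ℝᵖ. -/
open MeasureTheory Filter Finset Topology

/-- The nondecreasing rearrangement of the absolute values of the entries of `x`. -/
noncomputable def sortedAbs {p : ℕ} (x : Fin p → ℝ) : Fin p → ℝ :=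
  fun i => |x (Tuple.sort (fun j => |x j|) i)|

/-- The sorted ℓ1 norm `J_λ(x) = ∑ λ_i |x|_(i)`. -/
noncomputable def sortedL1 {p : ℕ} (lam x : Fin p → ℝ) : ℝ :=
  ∑ i, lam i * sortedAbs x i

/-- The SLOPE objective `(1/2)‖y - x‖² + J_λ(x)`. -/
noncomputable def slopeObj {p : ℕ} (lam y x : Fin p → ℝ) : ℝ :=
  (1 / 2) * ∑ i, (y i - x i) ^ 2 + sortedL1 lam x

open Classical in
/-- The SLOPE proximal operator: the (unique) minimizer of the SLOPE objective. -/
noncomputable def slopeProx {p : ℕ} (lam y : Fin p → ℝ) : Fin p → ℝ :=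
  if h : ∃ x : Fin p → ℝ, ∀ z : Fin p → ℝ, slopeObj lam y x ≤ slopeObj lam y z
  then h.choose else y

section Aux

variable {p : ℕ}

lemma my_sortedAbs_monotone (x : Fin p → ℝ) : Monotone (sortedAbs x) :=
  Tuple.monotone_sort (fun j => |x j|)

lemma my_J_nonneg (lam x : Fin p → ℝ) (hn : ∀ i, 0 ≤ lam i) : 0 ≤ sortedL1 lam x :=
  Finset.sum_nonneg fun i _ => mul_nonneg (hn i) (abs_nonneg _)

/-- For any permutation, pairing `lam` with a permuted `|x|` is at most the sorted ℓ¹ norm. -/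
lemma my_sum_perm_le (lam x : Fin p → ℝ) (hn : ∀ i, 0 ≤ lam i) (hm : Monotone lam)
    (σ : Equiv.Perm (Fin p)) : ∑ i, lam i * |x (σ i)| ≤ sortedL1 lam x := by
  have hs : ∀ j, sortedAbs x ((Tuple.sort fun j => |x j|).symm j) = |x j| := by
    intro j; simp [sortedAbs]
  have hmono : Monovary lam (sortedAbs x) := hm.monovary (my_sortedAbs_monotone x)
  calc ∑ i, lam i * |x (σ i)|
      = ∑ i, lam i * sortedAbs x ((σ.trans (Tuple.sort fun j => |x j|).symm) i) := by
        refine Finset.sum_congr rfl fun i _ => ?_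
        rw [Equiv.trans_apply, hs]
    _ ≤ ∑ i, lam i * sortedAbs x i := hmono.sum_mul_comp_perm_le_sum_mul
    _ = sortedL1 lam x := rfl

lemma my_prod_le (x₁ x₂ : Fin p → ℝ) :
    ∑ i, |x₁ i| * |x₂ i| ≤ ∑ i, sortedAbs x₁ i * sortedAbs x₂ i := by
  have hmono : Monovary (sortedAbs x₁) (sortedAbs x₂) :=
    (my_sortedAbs_monotone x₁).monovary (my_sortedAbs_monotone x₂)
  calc ∑ i, |x₁ i| * |x₂ i|
      = ∑ i, |x₁ ((Tuple.sort fun j => |x₁ j|) i)| * |x₂ ((Tuple.sort fun j => |x₁ j|) i)| :=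
        (Equiv.sum_comp (Tuple.sort fun j => |x₁ j|) (fun j => |x₁ j| * |x₂ j|)).symm
    _ = ∑ i, sortedAbs x₁ i *
          sortedAbs x₂ (((Tuple.sort fun j => |x₁ j|).trans (Tuple.sort fun j => |x₂ j|).symm) i) := by
        refine Finset.sum_congr rfl fun i _ => ?_
        simp [sortedAbs, Equiv.trans_apply]
    _ ≤ ∑ i, sortedAbs x₁ i * sortedAbs x₂ i := hmono.sum_mul_comp_perm_le_sum_mul

lemma my_sq_sum_eq (x : Fin p → ℝ) : ∑ i, sortedAbs x i ^ 2 = ∑ i, x i ^ 2 := by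
  calc ∑ i, sortedAbs x i ^ 2
      = ∑ i, (fun j => x j ^ 2) ((Tuple.sort fun j => |x j|) i) := by
        refine Finset.sum_congr rfl fun i _ => ?_
        simp [sortedAbs, sq_abs]
    _ = ∑ i, x i ^ 2 := Equiv.sum_comp (Tuple.sort fun j => |x j|) (fun j => x j ^ 2)

lemma my_sorted_contract (x₁ x₂ : Fin p → ℝ) :
    ∑ i, (sortedAbs x₁ i - sortedAbs x₂ i) ^ 2 ≤ ∑ i, (x₁ i - x₂ i) ^ 2 := by
  have expand : ∀ a b : Fin p → ℝ,
      ∑ i, (a i - b i) ^ 2 = ∑ i, a i ^ 2 + ∑ i, b i ^ 2 - 2 * ∑ i, a i * b i := by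
    intro a b
    rw [Finset.mul_sum, ← Finset.sum_add_distrib, ← Finset.sum_sub_distrib]
    exact Finset.sum_congr rfl fun i _ => by ring
  have h1 := my_sq_sum_eq x₁
  have h2 := my_sq_sum_eq x₂
  have h3 : ∑ i, x₁ i * x₂ i ≤ ∑ i, sortedAbs x₁ i * sortedAbs x₂ i := by
    refine le_trans (Finset.sum_le_sum fun i _ => ?_) (my_prod_le x₁ x₂)
    calc x₁ i * x₂ i ≤ |x₁ i * x₂ i| := le_abs_self _
      _ = |x₁ i| * |x₂ i| := abs_mul _ _
  rw [expand, expand]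
  linarith

lemma my_cs (f g : Fin p → ℝ) :
    ∑ i, f i * g i ≤ Real.sqrt (∑ i, f i ^ 2) * Real.sqrt (∑ i, g i ^ 2) := by
  have h := Finset.sum_mul_sq_le_sq_mul_sq Finset.univ f g
  calc ∑ i, f i * g i ≤ |∑ i, f i * g i| := le_abs_self _
    _ = Real.sqrt ((∑ i, f i * g i) ^ 2) := (Real.sqrt_sq_eq_abs _).symm
    _ ≤ Real.sqrt ((∑ i, f i ^ 2) * ∑ i, g i ^ 2) := Real.sqrt_le_sqrt h
    _ = _ := Real.sqrt_mul (Finset.sum_nonneg fun i _ => sq_nonneg _) _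

lemma my_J_mid (lam x₁ x₂ : Fin p → ℝ) (hn : ∀ i, 0 ≤ lam i) (hm : Monotone lam) :
    sortedL1 lam (fun i => (x₁ i + x₂ i) / 2)
      ≤ (sortedL1 lam x₁ + sortedL1 lam x₂) / 2 := by
  set m : Fin p → ℝ := fun i => (x₁ i + x₂ i) / 2 with hmdef
  have step : ∀ i, lam i * sortedAbs m i
      ≤ lam i * ((|x₁ ((Tuple.sort fun j => |m j|) i)| + |x₂ ((Tuple.sort fun j => |m j|) i)|) / 2) := by
    intro i
    refine mul_le_mul_of_nonneg_left ?_ (hn i)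
    have h1 : sortedAbs m i = |m ((Tuple.sort fun j => |m j|) i)| := rfl
    rw [h1]
    set j := (Tuple.sort fun j => |m j|) i
    have : m j = (x₁ j + x₂ j) / 2 := rfl
    rw [this]
    have habs : |x₁ j + x₂ j| ≤ |x₁ j| + |x₂ j| := abs_add_le _ _
    have h2 : |(x₁ j + x₂ j) / 2| = |x₁ j + x₂ j| / 2 := by
      rw [abs_div]; norm_num
    rw [h2]
    linarith
  calc sortedL1 lam m = ∑ i, lam i * sortedAbs m i := rfl
    _ ≤ ∑ i, lam i * ((|x₁ ((Tuple.sort fun j => |m j|) i)| + |x₂ ((Tuple.sort fun j => |m j|) i)|) / 2) :=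
        Finset.sum_le_sum fun i _ => step i
    _ = (∑ i, lam i * |x₁ ((Tuple.sort fun j => |m j|) i)|
          + ∑ i, lam i * |x₂ ((Tuple.sort fun j => |m j|) i)|) / 2 := by
        rw [← Finset.sum_add_distrib, Finset.sum_div]
        exact Finset.sum_congr rfl fun i _ => by ring
    _ ≤ (sortedL1 lam x₁ + sortedL1 lam x₂) / 2 := by
        have a1 := my_sum_perm_le lam x₁ hn hm (Tuple.sort fun j => |m j|)
        have a2 := my_sum_perm_le lam x₂ hn hm (Tuple.sort fun j => |m j|)
        linarith

lemma my_J_lip (lam : Fin p → ℝ) (hn : ∀ i, 0 ≤ lam i) (hm : Monotone lam) (x z : Fin p → ℝ) :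
    sortedL1 lam x ≤ sortedL1 lam z + (∑ i, lam i) * ∑ j, |x j - z j| := by
  set σ := Tuple.sort fun j => |x j| with hσ
  have h2 : ∀ i : Fin p, |x (σ i)| ≤ |z (σ i)| + ∑ j, |x j - z j| := by
    intro i
    have h3 : |x (σ i)| - |z (σ i)| ≤ |x (σ i) - z (σ i)| := abs_sub_abs_le_abs_sub _ _
    have h4 : |x (σ i) - z (σ i)| ≤ ∑ j, |x j - z j| :=
      Finset.single_le_sum (f := fun j => |x j - z j|) (fun j _ => abs_nonneg _) (Finset.mem_univ _)
    linarith
  calc sortedL1 lam x = ∑ i, lam i * |x (σ i)| := rfl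
    _ ≤ ∑ i, (lam i * |z (σ i)| + lam i * ∑ j, |x j - z j|) := by
        refine Finset.sum_le_sum fun i _ => ?_
        rw [← mul_add]
        exact mul_le_mul_of_nonneg_left (h2 i) (hn i)
    _ = ∑ i, lam i * |z (σ i)| + (∑ i, lam i) * ∑ j, |x j - z j| := by
        rw [Finset.sum_add_distrib, Finset.sum_mul]
    _ ≤ sortedL1 lam z + (∑ i, lam i) * ∑ j, |x j - z j| :=
        add_le_add_left (my_sum_perm_le lam z hn hm σ) _

lemma my_J_cont (lam : Fin p → ℝ) (hn : ∀ i, 0 ≤ lam i) (hm : Monotone lam) :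
    Continuous (fun x : Fin p → ℝ => sortedL1 lam x) := by
  have hC : 0 ≤ ∑ i, lam i := Finset.sum_nonneg fun i _ => hn i
  refine LipschitzWith.continuous
    (K := ⟨(∑ i, lam i) * p + 1, by positivity⟩) (LipschitzWith.of_dist_le_mul fun x z => ?_)
  have hb : ∀ a b : Fin p → ℝ, sortedL1 lam a - sortedL1 lam b ≤ (∑ i, lam i) * ∑ j, |a j - b j| := by
    intro a b
    have := my_J_lip lam hn hm a b
    linarith
  have hsum : ∑ j, |x j - z j| ≤ p * dist x z := by
    calc ∑ j, |x j - z j| = ∑ j : Fin p, dist (x j) (z j) := by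
          refine Finset.sum_congr rfl fun j _ => ?_
          rw [Real.dist_eq]
      _ ≤ ∑ _j : Fin p, dist x z := Finset.sum_le_sum fun j _ => dist_le_pi_dist x z j
      _ = p * dist x z := by simp [Finset.sum_const, Fintype.card_fin, nsmul_eq_mul]
  have hsum' : ∑ j, |z j - x j| ≤ p * dist x z := by
    calc ∑ j, |z j - x j| = ∑ j, |x j - z j| := by
          refine Finset.sum_congr rfl fun j _ => ?_
          rw [abs_sub_comm]
      _ ≤ p * dist x z := hsum
  rw [Real.dist_eq, abs_sub_le_iff]
  have hd : 0 ≤ dist x z := dist_nonneg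
  constructor
  · calc sortedL1 lam x - sortedL1 lam z ≤ (∑ i, lam i) * ∑ j, |x j - z j| := hb x z
      _ ≤ (∑ i, lam i) * (p * dist x z) := mul_le_mul_of_nonneg_left hsum hC
      _ ≤ ((∑ i, lam i) * p + 1) * dist x z := by nlinarith
      _ = (⟨(∑ i, lam i) * p + 1, by positivity⟩ : NNReal) * dist x z := rfl
  · calc sortedL1 lam z - sortedL1 lam x ≤ (∑ i, lam i) * ∑ j, |z j - x j| := hb z x
      _ ≤ (∑ i, lam i) * (p * dist x z) := mul_le_mul_of_nonneg_left hsum' hC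
      _ ≤ ((∑ i, lam i) * p + 1) * dist x z := by nlinarith
      _ = (⟨(∑ i, lam i) * p + 1, by positivity⟩ : NNReal) * dist x z := rfl

lemma my_exists_min (lam y : Fin p → ℝ) (hn : ∀ i, 0 ≤ lam i) (hm : Monotone lam) :
    ∃ x : Fin p → ℝ, ∀ z : Fin p → ℝ, slopeObj lam y x ≤ slopeObj lam y z := by
  have hcont : Continuous (fun x : Fin p → ℝ => slopeObj lam y x) := by
    unfold slopeObj
    refine Continuous.add (Continuous.mul continuous_const ?_) (my_J_cont lam hn hm)
    exact continuous_finset_sum _ fun i _ =>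
      ((continuous_const.sub (continuous_apply i)).pow 2)
  set c := sortedL1 lam y with hc0
  have hc : 0 ≤ c := my_J_nonneg lam y hn
  set R := Real.sqrt (2 * c + 2) with hRdef
  have hR : 0 ≤ R := Real.sqrt_nonneg _
  obtain ⟨x, hxS, hx⟩ := (isCompact_closedBall y R).exists_isMinOn
    ⟨y, Metric.mem_closedBall_self hR⟩ hcont.continuousOn
  refine ⟨x, fun z => ?_⟩
  by_cases hz : z ∈ Metric.closedBall y R
  · exact hx hz
  · have hzy : R < dist z y := by
      simpa [Metric.mem_closedBall, not_le] using hz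
    have hq : 2 * c + 2 < ∑ i, (y i - z i) ^ 2 := by
      have h1 : dist z y ≤ Real.sqrt (∑ i, (y i - z i) ^ 2) := by
        rw [dist_pi_le_iff (Real.sqrt_nonneg _)]
        intro i
        rw [Real.dist_eq]
        have h0 : |z i - y i| = Real.sqrt ((y i - z i) ^ 2) := by
          rw [Real.sqrt_sq_eq_abs, abs_sub_comm]
        rw [h0]
        exact Real.sqrt_le_sqrt
          (Finset.single_le_sum (f := fun j => (y j - z j) ^ 2) (fun j _ => sq_nonneg _) (Finset.mem_univ i))
      by_contra hcon
      push_neg at hcon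
      have h2 : Real.sqrt (∑ i, (y i - z i) ^ 2) ≤ R := by
        rw [hRdef]; exact Real.sqrt_le_sqrt hcon
      linarith
    have hxy : slopeObj lam y x ≤ slopeObj lam y y := hx (Metric.mem_closedBall_self hR)
    have hyy : slopeObj lam y y = c := by
      simp [slopeObj, hc0]
    have hzlb : c + 1 ≤ slopeObj lam y z := by
      have hJ : 0 ≤ sortedL1 lam z := my_J_nonneg lam z hn
      unfold slopeObj
      nlinarith
    linarith

end Aux

theorem statement3 {p : ℕ} (lam₁ lam₂ y₁ y₂ : Fin p → ℝ)
    (h₁n : ∀ i, 0 ≤ lam₁ i) (h₁m : Monotone lam₁)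
    (h₂n : ∀ i, 0 ≤ lam₂ i) (h₂m : Monotone lam₂) :
    Real.sqrt (∑ i, (slopeProx lam₁ y₁ i - slopeProx lam₂ y₂ i) ^ 2)
      ≤ 2 * (Real.sqrt (∑ i, (lam₁ i - lam₂ i) ^ 2)
          + Real.sqrt (∑ i, (y₁ i - y₂ i) ^ 2)) := by
  have h₁ := my_exists_min lam₁ y₁ h₁n h₁m
  have h₂ := my_exists_min lam₂ y₂ h₂n h₂m
  unfold slopeProx
  rw [dif_pos h₁, dif_pos h₂]
  set x₁ := h₁.choose with hx₁def
  set x₂ := h₂.choose with hx₂def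
  have hx₁ := h₁.choose_spec
  have hx₂ := h₂.choose_spec
  rw [← hx₁def] at hx₁
  rw [← hx₂def] at hx₂
  -- abbreviations
  set A := Real.sqrt (∑ i, (lam₁ i - lam₂ i) ^ 2) with hA
  set B := Real.sqrt (∑ i, (y₁ i - y₂ i) ^ 2) with hB
  set D := ∑ i, (x₁ i - x₂ i) ^ 2 with hD
  have hDnn : 0 ≤ D := Finset.sum_nonneg fun i _ => sq_nonneg _
  have hAnn : 0 ≤ A := Real.sqrt_nonneg _
  have hBnn : 0 ≤ B := Real.sqrt_nonneg _
  -- midpoint quadratic identity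
  have sum_split : ∀ y a b : Fin p → ℝ,
      ∑ i, (y i - (a i + b i) / 2) ^ 2
        = (1/2) * (∑ i, (y i - a i) ^ 2) + (1/2) * (∑ i, (y i - b i) ^ 2)
          - (1/4) * (∑ i, (a i - b i) ^ 2) := by
    intro y a b
    rw [Finset.mul_sum, Finset.mul_sum, Finset.mul_sum,
      ← Finset.sum_add_distrib, ← Finset.sum_sub_distrib]
    exact Finset.sum_congr rfl fun i _ => by ring
  have hsymm : ∑ i, (x₂ i - x₁ i) ^ 2 = D := by
    rw [hD]; exact Finset.sum_congr rfl fun i _ => by ring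
  -- key inequality 1
  have key1 : (1/2) * (∑ i, (y₁ i - x₁ i) ^ 2) + sortedL1 lam₁ x₁
      ≤ (1/2) * (∑ i, (y₁ i - x₂ i) ^ 2) + sortedL1 lam₁ x₂ - (1/4) * D := by
    have hmin := hx₁ (fun i => (x₁ i + x₂ i) / 2)
    have hq := sum_split y₁ x₁ x₂
    have hjm := my_J_mid lam₁ x₁ x₂ h₁n h₁m
    simp only [slopeObj] at hmin
    rw [hq] at hmin
    rw [← hD] at hmin
    linarith
  have key2 : (1/2) * (∑ i, (y₂ i - x₂ i) ^ 2) + sortedL1 lam₂ x₂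
      ≤ (1/2) * (∑ i, (y₂ i - x₁ i) ^ 2) + sortedL1 lam₂ x₁ - (1/4) * D := by
    have hmin := hx₂ (fun i => (x₂ i + x₁ i) / 2)
    have hq := sum_split y₂ x₂ x₁
    have hjm := my_J_mid lam₂ x₂ x₁ h₂n h₂m
    simp only [slopeObj] at hmin
    rw [hq, hsymm] at hmin
    linarith
  -- quadratic cross identity
  have qid : ∑ i, (y₁ i - y₂ i) * (x₁ i - x₂ i)
      = (1/2) * (∑ i, (y₁ i - x₂ i) ^ 2) - (1/2) * (∑ i, (y₁ i - x₁ i) ^ 2)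
        + (1/2) * (∑ i, (y₂ i - x₁ i) ^ 2) - (1/2) * (∑ i, (y₂ i - x₂ i) ^ 2) := by
    rw [Finset.mul_sum, Finset.mul_sum, Finset.mul_sum, Finset.mul_sum,
      ← Finset.sum_sub_distrib, ← Finset.sum_add_distrib, ← Finset.sum_sub_distrib]
    exact Finset.sum_congr rfl fun i _ => by ring
  -- J cross identity
  have jid : sortedL1 lam₁ x₂ - sortedL1 lam₁ x₁ + sortedL1 lam₂ x₁ - sortedL1 lam₂ x₂
      = ∑ i, (lam₁ i - lam₂ i) * (sortedAbs x₂ i - sortedAbs x₁ i) := by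
    simp only [sortedL1]
    rw [← Finset.sum_sub_distrib, ← Finset.sum_add_distrib, ← Finset.sum_sub_distrib]
    exact Finset.sum_congr rfl fun i _ => by ring
  have main : (1/2) * D ≤ ∑ i, (y₁ i - y₂ i) * (x₁ i - x₂ i)
      + ∑ i, (lam₁ i - lam₂ i) * (sortedAbs x₂ i - sortedAbs x₁ i) := by
    linarith
  -- Cauchy-Schwarz
  have cs1 : ∑ i, (y₁ i - y₂ i) * (x₁ i - x₂ i) ≤ B * Real.sqrt D := by
    have := my_cs (fun i => y₁ i - y₂ i) (fun i => x₁ i - x₂ i)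
    simpa [← hB, ← hD] using this
  have hsort : ∑ i, (sortedAbs x₂ i - sortedAbs x₁ i) ^ 2 ≤ D := by
    have h := my_sorted_contract x₂ x₁
    rw [hsymm] at h
    exact h
  have cs2 : ∑ i, (lam₁ i - lam₂ i) * (sortedAbs x₂ i - sortedAbs x₁ i)
      ≤ A * Real.sqrt D := by
    have h := my_cs (fun i => lam₁ i - lam₂ i) (fun i => sortedAbs x₂ i - sortedAbs x₁ i)
    have h2 : Real.sqrt (∑ i, (sortedAbs x₂ i - sortedAbs x₁ i) ^ 2) ≤ Real.sqrt D :=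
      Real.sqrt_le_sqrt hsort
    calc ∑ i, (lam₁ i - lam₂ i) * (sortedAbs x₂ i - sortedAbs x₁ i)
        ≤ A * Real.sqrt (∑ i, (sortedAbs x₂ i - sortedAbs x₁ i) ^ 2) := h
      _ ≤ A * Real.sqrt D := mul_le_mul_of_nonneg_left h2 hAnn
  have hDs : D = Real.sqrt D * Real.sqrt D := (Real.mul_self_sqrt hDnn).symm
  have final : (1/2) * (Real.sqrt D * Real.sqrt D) ≤ (A + B) * Real.sqrt D := by
    rw [← hDs]
    calc (1/2) * D ≤ B * Real.sqrt D + A * Real.sqrt D := by linarith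
      _ = (A + B) * Real.sqrt D := by ring
  have hsD : 0 ≤ Real.sqrt D := Real.sqrt_nonneg _
  rcases eq_or_lt_of_le hsD with h0 | h0
  · rw [← h0]; positivity
  · have h2 : Real.sqrt D * Real.sqrt D ≤ 2 * (A + B) * Real.sqrt D := by linarith
    exact le_of_mul_le_mul_right h2 h0
end

section
/- Let x⁽ᵖ⁾ ∈ ℝᵖ be a converging sequence whose empirical measures converge weakly to a probability measure with distribution function F, and suppose (1/p) Σ_{i=1}^p (x_i⁽ᵖ⁾)² → ∫ x² dF < ∞. Let F⁻¹(z) = inf{x : F(x) ≥ z} be the quantile function and let x_(1) ≤ ⋯ ≤ x_(p) denote the nondecreasing rearrangement of the entries of x⁽ᵖ⁾. Then (1/p) Σ_{i=1}^p ( x_(i) − F⁻¹(i/(p+1)) )² → 0 as p → ∞. -/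
open MeasureTheory Filter Finset Topology

/-- The empirical measures `(1/p) ∑ δ_{x_i}` of the sequence of vectors `x⁽ᵖ⁾` converge
weakly to the probability measure `μ` (tested against bounded continuous functions). -/
def EmpConverges (x : (p : ℕ) → Fin p → ℝ) (μ : Measure ℝ) : Prop :=
  ∀ f : BoundedContinuousFunction ℝ ℝ,
    Tendsto (fun p => (∑ i, f (x p i)) / (p : ℝ)) atTop (𝓝 (∫ t, f t ∂μ))

/-- The quantile function `F⁻¹(z) = inf {x : F(x) ≥ z}` of the distribution function
`F(t) = μ((-∞, t])` of the probability measure `μ`. -/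
noncomputable def quantile (μ : Measure ℝ) (z : ℝ) : ℝ :=
  sInf {t : ℝ | z ≤ (μ (Set.Iic t)).toReal}

open ProbabilityTheory
open scoped ENNReal NNReal
open Set (Ioo Ico Icc Iic Ici Ioc)

set_option linter.unusedSectionVars false
set_option maxHeartbeats 1000000





section QuantileBasics

variable {μ : Measure ℝ} [IsProbabilityMeasure μ] {z t : ℝ}

lemma quantile_eq (z : ℝ) : quantile μ z = sInf {t : ℝ | z ≤ cdf μ t} := by
  rw [quantile]
  congr 1
  ext t
  simp only [Set.mem_setOf_eq, cdf_eq_real, measureReal_def]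

omit [IsProbabilityMeasure μ] in
lemma q_nonempty (hz1 : z < 1) : {t : ℝ | z ≤ cdf μ t}.Nonempty :=
  ((tendsto_cdf_atTop (μ := μ)).eventually (eventually_ge_nhds hz1)).exists

omit [IsProbabilityMeasure μ] in
lemma q_bddBelow (hz0 : 0 < z) : BddBelow {t : ℝ | z ≤ cdf μ t} := by
  obtain ⟨t0, ht0⟩ := ((tendsto_cdf_atBot (μ := μ)).eventually (eventually_lt_nhds hz0)).exists
  refine ⟨t0, fun s hs => ?_⟩
  by_contra hc
  push_neg at hc
  exact absurd (hs.trans (monotone_cdf μ hc.le)) (not_le.2 ht0)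

lemma le_cdf_quantile (hz0 : 0 < z) (hz1 : z < 1) : z ≤ cdf μ (quantile μ z) := by
  set S := {t : ℝ | z ≤ cdf μ t} with hS
  have hne : S.Nonempty := q_nonempty hz1
  have hbdd : BddBelow S := q_bddBelow hz0
  have hmem : sInf S ∈ closure S := csInf_mem_closure hne hbdd
  have hneBot : (𝓝[S] (sInf S)).NeBot := mem_closure_iff_nhdsWithin_neBot.1 hmem
  have hcont : Tendsto (cdf μ) (𝓝[S] (sInf S)) (𝓝 (cdf μ (sInf S))) := by
    have h1 : ContinuousWithinAt (cdf μ) (Ici (sInf S)) (sInf S) :=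
      (cdf μ).right_continuous _
    apply h1.tendsto.mono_left
    apply nhdsWithin_mono
    intro s hs
    exact csInf_le hbdd hs
  rw [quantile_eq]
  exact ge_of_tendsto hcont (eventually_nhdsWithin_of_forall (fun s hs => hs))

lemma quantile_le_iff (hz0 : 0 < z) (hz1 : z < 1) :
    quantile μ z ≤ t ↔ z ≤ cdf μ t := by
  constructor
  · intro h
    exact (le_cdf_quantile hz0 hz1).trans (monotone_cdf μ h)
  · intro h
    rw [quantile_eq]
    exact csInf_le (q_bddBelow hz0) h

lemma quantile_monotoneOn : MonotoneOn (quantile μ) (Ioo 0 1) := by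
  intro z1 h1 z2 h2 h12
  rw [quantile_le_iff h1.1 h1.2]
  exact h12.trans (le_cdf_quantile h2.1 h2.2)

end QuantileBasics

section Qfun

variable (μ : Measure ℝ) [IsProbabilityMeasure μ]

/-- Global version of the quantile function, set to `0` outside `(0,1)`. -/
noncomputable def Qf : ℝ → ℝ := fun z => if 0 < z ∧ z < 1 then quantile μ z else 0

variable {μ}

lemma Qf_eq {z : ℝ} (hz : z ∈ Ioo (0:ℝ) 1) : Qf μ z = quantile μ z := if_pos ⟨hz.1, hz.2⟩

lemma Qf_monotoneOn : MonotoneOn (Qf μ) (Ioo 0 1) := by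
  intro z1 h1 z2 h2 h12
  rw [Qf_eq h1, Qf_eq h2]
  exact quantile_monotoneOn h1 h2 h12

lemma measurable_Qf : Measurable (Qf μ) := by
  apply measurable_of_Iic
  intro c
  have : Qf μ ⁻¹' Iic c
      = (Ioo (0:ℝ) 1 ∩ Iic (cdf μ c)) ∪ (if 0 ≤ c then (Ioo (0:ℝ) 1)ᶜ else ∅) := by
    ext z
    by_cases hz : 0 < z ∧ z < 1
    · simp only [Set.mem_preimage, Set.mem_Iic, Qf, if_pos hz, Set.mem_union, Set.mem_inter_iff,
        Set.mem_Ioo, Set.mem_compl_iff]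
      rw [quantile_le_iff hz.1 hz.2]
      split_ifs with h0c <;> simp [hz]
    · simp only [Set.mem_preimage, Set.mem_Iic, Qf, if_neg hz, Set.mem_union, Set.mem_inter_iff,
        Set.mem_Ioo, Set.mem_compl_iff]
      split_ifs with h0c <;> simp [hz, h0c]
  rw [this]
  refine (measurableSet_Ioo.inter measurableSet_Iic).union ?_
  split_ifs
  · exact measurableSet_Ioo.compl
  · exact MeasurableSet.empty

instance : IsFiniteMeasure (volume.restrict (Ioo (0:ℝ) 1)) :=
  ⟨by simp [Real.volume_Ioo]⟩

lemma map_Qf : (volume.restrict (Ioo (0:ℝ) 1)).map (Qf μ) = μ := by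
  refine Measure.ext_of_Iic _ μ (fun t => ?_)
  rw [Measure.map_apply measurable_Qf measurableSet_Iic,
    Measure.restrict_apply' measurableSet_Ioo]
  have hpre : Qf μ ⁻¹' Iic t ∩ Ioo (0:ℝ) 1 = Ioo (0:ℝ) 1 ∩ Iic (cdf μ t) := by
    ext z
    simp only [Set.mem_preimage, Set.mem_Iic, Set.mem_inter_iff, Set.mem_Ioo]
    constructor
    · rintro ⟨h1, h2⟩
      refine ⟨h2, ?_⟩
      rw [← quantile_le_iff h2.1 h2.2, ← Qf_eq (Set.mem_Ioo.2 h2)]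
      exact h1
    · rintro ⟨h2, h1⟩
      refine ⟨?_, h2⟩
      rw [Qf_eq (Set.mem_Ioo.2 h2), quantile_le_iff h2.1 h2.2]
      exact h1
  rw [hpre]
  have h0 : (0:ℝ) ≤ cdf μ t := cdf_nonneg μ t
  have h1 : cdf μ t ≤ 1 := cdf_le_one μ t
  rcases lt_or_ge (cdf μ t) 1 with hc | hc
  · have heq : Ioo (0:ℝ) 1 ∩ Iic (cdf μ t) = Ioc (0:ℝ) (cdf μ t) := by
      ext z
      simp only [Set.mem_inter_iff, Set.mem_Ioo, Set.mem_Iic, Set.mem_Ioc]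
      constructor
      · rintro ⟨⟨a, b⟩, c⟩; exact ⟨a, c⟩
      · rintro ⟨a, c⟩; exact ⟨⟨a, lt_of_le_of_lt c hc⟩, c⟩
    rw [heq, Real.volume_Ioc, ← ofReal_cdf, sub_zero]
  · have hc1 : cdf μ t = 1 := le_antisymm h1 hc
    have heq : Ioo (0:ℝ) 1 ∩ Iic (cdf μ t) = Ioo (0:ℝ) 1 := by
      rw [hc1]
      exact Set.inter_eq_left.2 (fun z hz => le_of_lt (Set.mem_Ioo.1 hz).2)
    rw [heq, Real.volume_Ioo, ← ofReal_cdf, hc1, sub_zero]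

lemma integral_sq_Qf : ∫ u in Ioo (0:ℝ) 1, (Qf μ u) ^ 2 = ∫ t, t ^ 2 ∂μ := by
  conv_rhs => rw [← map_Qf (μ := μ)]
  rw [integral_map measurable_Qf.aemeasurable
    ((continuous_pow 2).aestronglyMeasurable)]

lemma integrable_sq_Qf (h2int : Integrable (fun t => t ^ 2) μ) :
    Integrable (fun u => (Qf μ u) ^ 2) (volume.restrict (Ioo (0:ℝ) 1)) := by
  rw [← map_Qf (μ := μ)] at h2int
  exact (integrable_map_measure ((continuous_pow 2).aestronglyMeasurable)
    measurable_Qf.aemeasurable).1 h2int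

end Qfun


lemma riesz_L2 {α : Type*} [MeasurableSpace α] {ν : Measure α}
    {f : α → ℝ} {fn : ℕ → α → ℝ}
    (hf : AEMeasurable f ν) (hfn : ∀ n, AEMeasurable (fn n) ν)
    (hae : ∀ᵐ u ∂ν, Tendsto (fun n => fn n u) atTop (𝓝 (f u)))
    (hfi : Integrable (fun u => f u ^ 2) ν)
    (hfni : ∀ n, Integrable (fun u => fn n u ^ 2) ν)
    (hlim : Tendsto (fun n => ∫ u, fn n u ^ 2 ∂ν) atTop (𝓝 (∫ u, f u ^ 2 ∂ν))) :
    Tendsto (fun n => ∫ u, (fn n u - f u) ^ 2 ∂ν) atTop (𝓝 0) := by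
  classical
  set c := ∫ u, f u ^ 2 ∂ν with hc
  -- integrability of dominating functions
  have hDint : ∀ n, Integrable (fun u => 2 * fn n u ^ 2 + 2 * f u ^ 2) ν := fun n =>
    ((hfni n).const_mul 2).add (hfi.const_mul 2)
  have hdmeas : ∀ n, AEMeasurable (fun u => (fn n u - f u) ^ 2) ν := fun n =>
    ((hfn n).sub hf).pow_const 2
  have hdi : ∀ n, Integrable (fun u => (fn n u - f u) ^ 2) ν := by
    intro n
    refine (hDint n).mono' (hdmeas n).aestronglyMeasurable ?_
    filter_upwards with u
    rw [Real.norm_eq_abs, abs_of_nonneg (sq_nonneg _)]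
    nlinarith [sq_nonneg (fn n u + f u)]
  set Bn : ℕ → ℝ≥0∞ := fun n => ∫⁻ u, ENNReal.ofReal ((fn n u - f u) ^ 2) ∂ν with hBn
  set An : ℕ → ℝ≥0∞ := fun n => ∫⁻ u, ENNReal.ofReal (2 * fn n u ^ 2 + 2 * f u ^ 2) ∂ν with hAn
  have hBn_eq : ∀ n, Bn n = ENNReal.ofReal (∫ u, (fn n u - f u) ^ 2 ∂ν) := fun n =>
    (ofReal_integral_eq_lintegral_ofReal (hdi n) (Eventually.of_forall fun u => sq_nonneg _)).symm
  have hAn_eq : ∀ n, An n = ENNReal.ofReal (∫ u, (2 * fn n u ^ 2 + 2 * f u ^ 2) ∂ν) := fun n =>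
    (ofReal_integral_eq_lintegral_ofReal (hDint n)
      (Eventually.of_forall fun u => by positivity)).symm
  have hBA : ∀ n, Bn n ≤ An n := by
    intro n
    refine lintegral_mono fun u => ENNReal.ofReal_le_ofReal ?_
    nlinarith [sq_nonneg (fn n u + f u)]
  have hBtop : ∀ n, Bn n ≠ ⊤ := fun n => by rw [hBn_eq n]; exact ENNReal.ofReal_ne_top
  -- convergence of An
  have hAnlim : Tendsto An atTop (𝓝 (ENNReal.ofReal (4 * c))) := by
    have h1 : Tendsto (fun n => ∫ u, (2 * fn n u ^ 2 + 2 * f u ^ 2) ∂ν) atTop (𝓝 (4 * c)) := by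
      have : ∀ n, ∫ u, (2 * fn n u ^ 2 + 2 * f u ^ 2) ∂ν
          = 2 * (∫ u, fn n u ^ 2 ∂ν) + 2 * c := by
        intro n
        rw [integral_add ((hfni n).const_mul 2) (hfi.const_mul 2), integral_const_mul,
          integral_const_mul]
      simp_rw [this]
      have := ((hlim.const_mul 2).add_const (2 * c))
      convert this using 2
      ring
    have h2 := (ENNReal.continuous_ofReal.tendsto _).comp h1
    refine Tendsto.congr (fun n => ?_) h2
    exact (hAn_eq n).symm
  -- Fatou
  have hFatou : ENNReal.ofReal (4 * c) ≤ atTop.liminf (fun n => An n - Bn n) := by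
    have hgmeas : ∀ n, AEMeasurable
        (fun u => ENNReal.ofReal (2 * fn n u ^ 2 + 2 * f u ^ 2)
          - ENNReal.ofReal ((fn n u - f u) ^ 2)) ν := by
      intro n
      exact (ENNReal.measurable_ofReal.comp_aemeasurable
          ((((hfn n).pow_const 2).const_mul 2).add ((hf.pow_const 2).const_mul 2))).sub
        (ENNReal.measurable_ofReal.comp_aemeasurable (hdmeas n))
    have key : ∫⁻ u, atTop.liminf (fun n => ENNReal.ofReal (2 * fn n u ^ 2 + 2 * f u ^ 2)
          - ENNReal.ofReal ((fn n u - f u) ^ 2)) ∂ν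
        ≤ atTop.liminf (fun n => ∫⁻ u, (ENNReal.ofReal (2 * fn n u ^ 2 + 2 * f u ^ 2)
          - ENNReal.ofReal ((fn n u - f u) ^ 2)) ∂ν) := lintegral_liminf_le' hgmeas
    have hsub : ∀ n, ∫⁻ u, (ENNReal.ofReal (2 * fn n u ^ 2 + 2 * f u ^ 2)
          - ENNReal.ofReal ((fn n u - f u) ^ 2)) ∂ν = An n - Bn n := by
      intro n
      rw [hBn, hAn]
      refine lintegral_sub' (ENNReal.measurable_ofReal.comp_aemeasurable (hdmeas n))
        (hBtop n) ?_
      filter_upwards with u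
      refine ENNReal.ofReal_le_ofReal ?_
      nlinarith [sq_nonneg (fn n u + f u)]
    rw [funext hsub] at key
    refine le_trans ?_ key
    have hliminf_eq : ∀ᵐ u ∂ν, atTop.liminf (fun n =>
        ENNReal.ofReal (2 * fn n u ^ 2 + 2 * f u ^ 2) - ENNReal.ofReal ((fn n u - f u) ^ 2))
        = ENNReal.ofReal (4 * f u ^ 2) := by
      filter_upwards [hae] with u hu
      have h1 : Tendsto (fun n => ENNReal.ofReal (2 * fn n u ^ 2 + 2 * f u ^ 2)
          - ENNReal.ofReal ((fn n u - f u) ^ 2)) atTop (𝓝 (ENNReal.ofReal (4 * f u ^ 2))) := by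
        have hr : Tendsto (fun n => 2 * fn n u ^ 2 + 2 * f u ^ 2 - (fn n u - f u) ^ 2) atTop
            (𝓝 (2 * f u ^ 2 + 2 * f u ^ 2 - (f u - f u) ^ 2)) := by
          exact (((hu.pow 2).const_mul 2).add_const (2 * f u ^ 2)).sub
            ((hu.sub_const (f u)).pow 2)
        have heq4 : 2 * f u ^ 2 + 2 * f u ^ 2 - (f u - f u) ^ 2 = 4 * f u ^ 2 := by ring
        rw [heq4] at hr
        have h2 := (ENNReal.continuous_ofReal.tendsto _).comp hr
        refine h2.congr fun n => ?_
        show ENNReal.ofReal (2 * fn n u ^ 2 + 2 * f u ^ 2 - (fn n u - f u) ^ 2) = _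
        rw [ENNReal.ofReal_sub _ (sq_nonneg _)]
      exact h1.liminf_eq
    calc ENNReal.ofReal (4 * c)
        ≤ ∫⁻ u, ENNReal.ofReal (4 * f u ^ 2) ∂ν := by
          rw [← ofReal_integral_eq_lintegral_ofReal (hfi.const_mul 4)
            (Eventually.of_forall fun u => by positivity), integral_const_mul]
      _ = _ := (lintegral_congr_ae hliminf_eq).symm
  -- conclude
  have hB0 : Tendsto Bn atTop (𝓝 0) := by
    rw [ENNReal.tendsto_atTop_zero]
    intro ε hε
    refine eventually_atTop.1 ?_
    set εr := min ε 1 with hεr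
    have hεr0 : εr ≠ 0 := (lt_min hε zero_lt_one).ne'
    have hεrtop : εr ≠ ⊤ := ((min_le_right _ _).trans_lt ENNReal.one_lt_top).ne
    set e := εr / 2 with he
    have he0 : e ≠ 0 := by
      intro h
      rcases ENNReal.div_eq_zero_iff.1 h with h' | h'
      · exact hεr0 h'
      · exact ENNReal.ofNat_ne_top h'
    have hAev : ∀ᶠ n in atTop, An n < ENNReal.ofReal (4 * c) + e :=
      hAnlim.eventually_lt_const (by
        exact ENNReal.lt_add_right ENNReal.ofReal_ne_top he0)
    rcases le_or_gt (ENNReal.ofReal (4 * c)) e with hcase | hcase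
    · filter_upwards [hAev] with n hn
      calc Bn n ≤ An n := hBA n
        _ ≤ ENNReal.ofReal (4 * c) + e := hn.le
        _ ≤ e + e := by exact add_le_add_left hcase e
        _ = εr := by rw [he, ENNReal.add_halves]
        _ ≤ ε := min_le_left _ _
    · have hblt : ENNReal.ofReal (4 * c) - e < ENNReal.ofReal (4 * c) :=
        ENNReal.sub_lt_self ENNReal.ofReal_ne_top (by exact (pos_of_gt hcase).ne') he0
      have hBev : ∀ᶠ n in atTop, ENNReal.ofReal (4 * c) - e < An n - Bn n :=
        eventually_lt_of_lt_liminf (hblt.trans_le hFatou)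
      filter_upwards [hAev, hBev] with n h1 h2
      have h3 : (ENNReal.ofReal (4 * c) - e) + Bn n < An n := lt_tsub_iff_right.1 h2
      have h4 : (ENNReal.ofReal (4 * c) - e) + Bn n < (ENNReal.ofReal (4 * c) - e) + (e + e) := by
        refine h3.trans_le ?_
        calc An n ≤ ENNReal.ofReal (4 * c) + e := h1.le
          _ = (ENNReal.ofReal (4 * c) - e) + (e + e) := by
            rw [← add_assoc, tsub_add_cancel_of_le hcase.le]
      have h5 : Bn n < e + e := by
        refine lt_of_add_lt_add_left h4
      calc Bn n ≤ e + e := h5.le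
        _ = εr := by rw [he, ENNReal.add_halves]
        _ ≤ ε := min_le_left _ _
  -- transfer to real integrals
  have heq : ∀ n, ∫ u, (fn n u - f u) ^ 2 ∂ν = (Bn n).toReal := by
    intro n
    rw [hBn_eq n, ENNReal.toReal_ofReal (integral_nonneg fun u => sq_nonneg _)]
  simp_rw [heq]
  have := (ENNReal.tendsto_toReal (by simp : (0:ℝ≥0∞) ≠ ⊤)).comp hB0
  simpa [Function.comp_def] using this




section Ecdf

/-- A piecewise linear bounded continuous function interpolating between the indicators of
`Iic t` and `Iic t'`. -/
noncomputable def stepfn (t t' : ℝ) : BoundedContinuousFunction ℝ ℝ :=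
  BoundedContinuousFunction.ofNormedAddCommGroup
    (fun s => max 0 (min 1 ((t' - s) / (t' - t))))
    (by
      apply Continuous.max continuous_const
      apply Continuous.min continuous_const
      exact (continuous_const.sub continuous_id).div_const _)
    1
    (by
      intro s
      rw [Real.norm_eq_abs, abs_le]
      constructor
      · linarith [le_max_left (0:ℝ) (min 1 ((t' - s) / (t' - t)))]
      · apply max_le (by norm_num)
        exact min_le_left _ _)

lemma stepfn_apply (t t' s : ℝ) : stepfn t t' s = max 0 (min 1 ((t' - s) / (t' - t))) := rfl

lemma stepfn_nonneg (t t' s : ℝ) : 0 ≤ stepfn t t' s := le_max_left _ _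

lemma stepfn_le_one (t t' s : ℝ) : stepfn t t' s ≤ 1 := by
  rw [stepfn_apply]
  exact max_le (by norm_num) (min_le_left _ _)

lemma stepfn_eq_one {t t' s : ℝ} (h : t < t') (hs : s ≤ t) : stepfn t t' s = 1 := by
  rw [stepfn_apply]
  have h1 : (1:ℝ) ≤ (t' - s) / (t' - t) := by
    rw [le_div_iff₀ (by linarith)]
    linarith
  rw [min_eq_left h1]
  exact max_eq_right zero_le_one

lemma stepfn_eq_zero {t t' s : ℝ} (h : t < t') (hs : t' ≤ s) : stepfn t t' s = 0 := by
  rw [stepfn_apply]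
  have h1 : (t' - s) / (t' - t) ≤ 0 := div_nonpos_of_nonpos_of_nonneg (by linarith) (by linarith)
  rw [max_eq_left]
  exact (min_le_right _ _).trans h1

lemma stepfn_le_indicator {t t' : ℝ} (h : t < t') (s : ℝ) :
    stepfn t t' s ≤ (Iic t').indicator (fun _ => (1:ℝ)) s := by
  by_cases hs : s ≤ t'
  · rw [Set.indicator_of_mem (Set.mem_Iic.2 hs)]
    exact stepfn_le_one _ _ _
  · rw [Set.indicator_of_notMem (by simpa using hs)]
    push_neg at hs
    rw [stepfn_eq_zero h hs.le]

lemma indicator_le_stepfn {t t' : ℝ} (h : t < t') (s : ℝ) :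
    (Iic t).indicator (fun _ => (1:ℝ)) s ≤ stepfn t t' s := by
  by_cases hs : s ≤ t
  · rw [Set.indicator_of_mem (Set.mem_Iic.2 hs), stepfn_eq_one h hs]
  · rw [Set.indicator_of_notMem (by simpa using hs)]
    exact stepfn_nonneg _ _ _

variable {μ : Measure ℝ} [IsProbabilityMeasure μ] {x : (p : ℕ) → Fin p → ℝ}

lemma integral_stepfn_le {t t' : ℝ} (h : t < t') :
    ∫ s, stepfn t t' s ∂μ ≤ cdf μ t' := by
  have := integral_mono ((stepfn t t').integrable μ)
    ((integrable_const (1:ℝ)).indicator measurableSet_Iic) (stepfn_le_indicator h)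
  rw [integral_indicator_const (1:ℝ) measurableSet_Iic] at this
  simpa [cdf_eq_real] using this
 
lemma le_integral_stepfn {t t' : ℝ} (h : t < t') :
    cdf μ t ≤ ∫ s, stepfn t t' s ∂μ := by
  have := integral_mono ((integrable_const (1:ℝ)).indicator measurableSet_Iic)
    ((stepfn t t').integrable μ) (indicator_le_stepfn h)
  rw [integral_indicator_const (1:ℝ) measurableSet_Iic] at this
  simpa [cdf_eq_real] using this

lemma card_filter_le_cast (p : ℕ) (t : ℝ) :
    ((Finset.univ.filter (fun i => x p i ≤ t)).card : ℝ) = ∑ i, if x p i ≤ t then (1:ℝ) else 0 := by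
  rw [Finset.card_filter]
  push_cast
  rfl

lemma sum_stepfn_le (p : ℕ) {t t' : ℝ} (h : t < t') :
    ∑ i, stepfn t t' (x p i) ≤ ∑ i, if x p i ≤ t' then (1:ℝ) else 0 := by
  refine Finset.sum_le_sum fun i _ => ?_
  by_cases hs : x p i ≤ t'
  · rw [if_pos hs]; exact stepfn_le_one _ _ _
  · rw [if_neg hs]; push_neg at hs; exact le_of_eq (stepfn_eq_zero h hs.le)

lemma le_sum_stepfn (p : ℕ) {t t' : ℝ} (h : t < t') :
    (∑ i, if x p i ≤ t then (1:ℝ) else 0) ≤ ∑ i, stepfn t t' (x p i) := by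
  refine Finset.sum_le_sum fun i _ => ?_
  by_cases hs : x p i ≤ t
  · rw [if_pos hs]; exact le_of_eq (stepfn_eq_one h hs).symm
  · rw [if_neg hs]; exact stepfn_nonneg _ _ _

lemma cdf_leftLim_eq {t : ℝ} (ht : μ {t} = 0) : ∀ c < cdf μ t, ∃ t'' < t, c < cdf μ t'' := by
  intro c hc
  have hll : Function.leftLim (cdf μ) t = cdf μ t := by
    have h1 := StieltjesFunction.measure_singleton (cdf μ) t
    rw [measure_cdf] at h1
    rw [ht] at h1
    have h2 : Function.leftLim (cdf μ) t ≤ cdf μ t := (monotone_cdf μ).leftLim_le le_rfl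
    have h3 : cdf μ t - Function.leftLim (cdf μ) t ≤ 0 := by
      by_contra hcon
      push_neg at hcon
      rw [eq_comm, ENNReal.ofReal_eq_zero] at h1
      linarith
    linarith
  have htend : Tendsto (cdf μ) (𝓝[<] t) (𝓝 (cdf μ t)) := by
    rw [← hll]
    exact (monotone_cdf μ).tendsto_leftLim t
  rcases ((htend.eventually (eventually_gt_nhds hc)).and eventually_mem_nhdsWithin).exists
    with ⟨t'', h1, h2⟩
  exact ⟨t'', h2, h1⟩

lemma cdf_right {t : ℝ} : ∀ c, cdf μ t < c → ∃ t' > t, cdf μ t' < c := by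
  intro c hc
  have htend : Tendsto (cdf μ) (𝓝[>] t) (𝓝 (cdf μ t)) := by
    have := (cdf μ).right_continuous t
    exact this.tendsto.mono_left (nhdsWithin_mono _ Set.Ioi_subset_Ici_self)
  rcases ((htend.eventually (eventually_lt_nhds hc)).and eventually_mem_nhdsWithin).exists
    with ⟨t', h1, h2⟩
  exact ⟨t', h2, h1⟩

lemma ecdf_tendsto (hconv : EmpConverges x μ) {t : ℝ} (ht : μ {t} = 0) :
    Tendsto (fun p => ((Finset.univ.filter (fun i => x p i ≤ t)).card : ℝ) / p)
      atTop (𝓝 (cdf μ t)) := by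
  rw [tendsto_order]
  constructor
  · intro c hc
    obtain ⟨t'', ht''t, ht''⟩ := cdf_leftLim_eq ht c hc
    have hf := hconv (stepfn t'' t)
    have hint : c < ∫ s, stepfn t'' t s ∂μ := lt_of_lt_of_le ht'' (le_integral_stepfn ht''t)
    have hev := hf.eventually (eventually_gt_nhds hint)
    filter_upwards [hev, eventually_ge_atTop 1] with p hp hp1
    have hple : (∑ i, stepfn t'' t (x p i)) / p
        ≤ ((Finset.univ.filter (fun i => x p i ≤ t)).card : ℝ) / p := by
      rw [card_filter_le_cast]
      apply div_le_div_of_nonneg_right ?_ ?_ |>.trans_eq rfl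
      · exact sum_stepfn_le p ht''t
      · exact Nat.cast_nonneg p
    exact lt_of_lt_of_le hp hple
  · intro c hc
    obtain ⟨t', htt', ht'⟩ := cdf_right c hc
    have hf := hconv (stepfn t t')
    have hint : ∫ s, stepfn t t' s ∂μ < c := lt_of_le_of_lt (integral_stepfn_le htt') ht'
    have hev := hf.eventually (eventually_lt_nhds hint)
    filter_upwards [hev, eventually_ge_atTop 1] with p hp hp1
    have hple : ((Finset.univ.filter (fun i => x p i ≤ t)).card : ℝ) / p
        ≤ (∑ i, stepfn t t' (x p i)) / p := by
      rw [card_filter_le_cast]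
      apply div_le_div_of_nonneg_right ?_ ?_ |>.trans_eq rfl
      · exact le_sum_stepfn p htt'
      · exact Nat.cast_nonneg p
    exact lt_of_le_of_lt hple hp

end Ecdf


/-- index of the subinterval of `(0,1)` containing `u`. -/
noncomputable def kIdx (p : ℕ) (u : ℝ) : ℕ := min ⌊(p:ℝ) * u⌋₊ (p - 1)

lemma measurable_kIdx (p : ℕ) : Measurable (kIdx p) :=
  ((measurable_of_countable (fun n => min n (p-1))).comp
    (Nat.measurable_floor.comp (measurable_id.const_mul _)))

lemma kIdx_lt {p : ℕ} (hp : 1 ≤ p) (u : ℝ) : kIdx p u < p :=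
  lt_of_le_of_lt (min_le_right _ _) (by omega)

lemma kIdx_eq {p : ℕ} (hp : 1 ≤ p) {i : ℕ} (hi : i < p) {u : ℝ}
    (hu : u ∈ Ico ((i:ℝ)/p) (((i:ℝ)+1)/p)) : kIdx p u = i := by
  have hp0 : (0:ℝ) < p := by exact_mod_cast hp
  obtain ⟨h1, h2⟩ := hu
  have hfl : ⌊(p:ℝ) * u⌋₊ = i := by
    rw [Nat.floor_eq_iff (by nlinarith [(div_nonneg (by positivity) hp0.le).trans h1])]
    constructor
    · rw [div_le_iff₀ hp0] at h1
      nlinarith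
    · rw [lt_div_iff₀ hp0] at h2
      nlinarith
  rw [kIdx, hfl]
  omega

lemma kIdx_floor {p : ℕ} (hp : 1 ≤ p) {u : ℝ} (hu : u ∈ Ioo (0:ℝ) 1) :
    kIdx p u = ⌊(p:ℝ) * u⌋₊ := by
  have hp0 : (0:ℝ) < p := by exact_mod_cast hp
  have : ⌊(p:ℝ) * u⌋₊ ≤ p - 1 := by
    have : ⌊(p:ℝ) * u⌋₊ < p := by
      rw [Nat.floor_lt (by nlinarith [hu.1])]
      nlinarith [hu.2]
    omega
  rw [kIdx, min_eq_left this]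

lemma Ico_biUnion {p : ℕ} (hp : 1 ≤ p) :
    Ico (0:ℝ) 1 = ⋃ i ∈ Finset.range p, Ico ((i:ℝ)/p) (((i:ℝ)+1)/p) := by
  have hp0 : (0:ℝ) < p := by exact_mod_cast hp
  ext u
  simp only [Set.mem_iUnion, Finset.mem_range, Set.mem_Ico]
  constructor
  · rintro ⟨h0, h1⟩
    have hpu0 : (0:ℝ) ≤ (p:ℝ) * u := by positivity
    refine ⟨⌊(p:ℝ) * u⌋₊, ?_, ?_, ?_⟩
    · rw [Nat.floor_lt hpu0]
      nlinarith
    · rw [div_le_iff₀ hp0]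
      have := Nat.floor_le hpu0
      linarith [this]
    · rw [lt_div_iff₀ hp0]
      have := Nat.lt_floor_add_one ((p:ℝ) * u)
      push_cast
      linarith
  · rintro ⟨i, hi, h1, h2⟩
    constructor
    · exact le_trans (by positivity) h1
    · refine lt_of_lt_of_le h2 ?_
      rw [div_le_one hp0]
      have : (i:ℝ) + 1 ≤ p := by exact_mod_cast hi
      exact this

lemma step_integral {p : ℕ} (hp : 1 ≤ p) (c : ℕ → ℝ) :
    ∫ u in Ioo (0:ℝ) 1, c (kIdx p u) = (∑ i ∈ Finset.range p, c i) / p := by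
  have hp0 : (0:ℝ) < p := by exact_mod_cast hp
  rw [setIntegral_congr_set MeasureTheory.Ioo_ae_eq_Ico, Ico_biUnion hp,
    integral_biUnion_finset (Finset.range p) (fun i _ => measurableSet_Ico)
      ?_ ?_]
  · rw [Finset.sum_div]
    refine Finset.sum_congr rfl fun i hi => ?_
    rw [Finset.mem_range] at hi
    have hcongr : Set.EqOn (fun u => c (kIdx p u)) (fun _ => c i)
        (Ico ((i:ℝ)/p) (((i:ℝ)+1)/p)) := fun u hu => by
      simp only
      rw [kIdx_eq hp hi hu]
    rw [setIntegral_congr_fun measurableSet_Ico hcongr, setIntegral_const,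
      measureReal_def, Real.volume_Ico]
    have harith : ((i:ℝ)+1)/p - (i:ℝ)/p = 1/p := by
      rw [div_sub_div_same]
      ring_nf
    rw [harith, ENNReal.toReal_ofReal (by positivity), smul_eq_mul]
    ring
  · intro i hi j hj hij
    simp only [Finset.coe_range, Set.mem_setOf_eq] at hi hj
    simp only [Function.onFun]
    rw [Set.Ico_disjoint_Ico]
    rcases lt_or_gt_of_ne hij with h | h
    · refine le_trans (min_le_left _ _) (le_trans ?_ (le_max_right _ _))
      have hc : (i:ℝ) + 1 ≤ (j:ℝ) := by exact_mod_cast h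
      gcongr
    · refine le_trans (min_le_right _ _) (le_trans ?_ (le_max_left _ _))
      have hc : (j:ℝ) + 1 ≤ (i:ℝ) := by exact_mod_cast h
      gcongr
  · intro i hi
    rw [Finset.mem_range] at hi
    have hcongr : Set.EqOn (fun u => c (kIdx p u)) (fun _ => c i)
        (Ico ((i:ℝ)/p) (((i:ℝ)+1)/p)) := fun u hu => by
      simp only
      rw [kIdx_eq hp hi hu]
    rw [IntegrableOn, integrable_congr (ae_restrict_of_forall_mem measurableSet_Ico hcongr)]
    exact integrableOn_const (by rw [Real.volume_Ico]; exact ENNReal.ofReal_ne_top)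

section GH

variable (x : (p : ℕ) → Fin p → ℝ) (μ : Measure ℝ) [IsProbabilityMeasure μ]

/-- the sorted values of `x p`, as a function of a natural index (0 outside range). -/
noncomputable def gaux (p n : ℕ) : ℝ :=
  if h : n < p then x p (Tuple.sort (x p) ⟨n, h⟩) else 0

/-- empirical quantile step function -/
noncomputable def Gp (p : ℕ) (u : ℝ) : ℝ := gaux x p (kIdx p u)

/-- discretized quantile values -/
noncomputable def Hq (p n : ℕ) : ℝ := quantile μ (((n:ℝ)+1)/((p:ℝ)+1))

/-- discretized quantile step function -/
noncomputable def Hp (p : ℕ) (u : ℝ) : ℝ := Hq μ p (kIdx p u)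

lemma measurable_Gp (p : ℕ) : Measurable (Gp x p) :=
  (measurable_of_countable (gaux x p)).comp (measurable_kIdx p)

lemma measurable_Hp (p : ℕ) : Measurable (Hp μ p) :=
  (measurable_of_countable (Hq μ p)).comp (measurable_kIdx p)

lemma card_sorted (p : ℕ) (t : ℝ) :
    Fintype.card {i // x p (Tuple.sort (x p) i) ≤ t}
      = (Finset.univ.filter (fun i => x p i ≤ t)).card := by
  rw [Fintype.card_congr ((Tuple.sort (x p)).subtypeEquiv
    (p := fun i => x p (Tuple.sort (x p) i) ≤ t) (q := fun j => x p j ≤ t)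
    (fun i => Iff.rfl))]
  exact Fintype.card_subtype _

lemma sorted_le_iff {p : ℕ} {k : ℕ} (hk : k < p) (t : ℝ) :
    x p (Tuple.sort (x p) ⟨k, hk⟩) ≤ t
      ↔ k < (Finset.univ.filter (fun i => x p i ≤ t)).card := by
  have h := Tuple.lt_card_le_iff_apply_le_of_monotone (f := x p ∘ Tuple.sort (x p)) (a := t)
      (j := ⟨k, hk⟩) (Tuple.monotone_sort (x p))
  rw [← card_sorted x p t, Fintype.card_subtype]
  exact ⟨fun h1 => h.2 h1, fun h1 => h.1 h1⟩

lemma exists_nonatom {a b : ℝ} (hab : a < b) : ∃ t ∈ Ioo a b, μ {t} = 0 := by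
  have hA : {t : ℝ | 0 < μ {t}}.Countable := by
    have := Measure.countable_meas_level_set_pos (μ := μ) (g := (id : ℝ → ℝ)) measurable_id
    refine this.mono fun t ht => ?_
    simpa [Set.setOf_eq_eq_singleton] using ht
  have hvol : volume (Ioo a b \ {t : ℝ | 0 < μ {t}}) ≠ 0 := by
    rw [measure_diff_null (hA.measure_zero volume)]
    simp [Real.volume_Ioo, hab, sub_pos.2 hab]
  obtain ⟨t, ht⟩ := nonempty_of_measure_ne_zero hvol
  refine ⟨t, ht.1, ?_⟩
  have := ht.2
  simp only [Set.mem_setOf_eq, not_lt, le_zero_iff] at this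
  exact this

variable {x μ}

lemma Gp_tendsto (hconv : EmpConverges x μ) {u : ℝ} (hu : u ∈ Ioo (0:ℝ) 1)
    (hcont : ContinuousWithinAt (Qf μ) (Ioo (0:ℝ) 1) u) :
    Tendsto (fun p => Gp x p u) atTop (𝓝 (Qf μ u)) := by
  rw [tendsto_order]
  constructor
  · intro c hc
    obtain ⟨t, htmem, htat⟩ := exists_nonatom μ
      (show max c (Qf μ u - 1) < Qf μ u from max_lt hc (by linarith))
    have hct : c < t := lt_of_le_of_lt (le_max_left _ _) htmem.1
    have hcdf : cdf μ t < u := by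
      by_contra hcon
      push_neg at hcon
      have h1 : quantile μ u ≤ t := (quantile_le_iff hu.1 hu.2).2 hcon
      rw [← Qf_eq hu] at h1
      linarith [htmem.2]
    have hev1 := (ecdf_tendsto hconv htat).eventually (eventually_lt_nhds hcdf)
    filter_upwards [hev1, eventually_ge_atTop 1] with p hp1 hp2
    have hp0 : (0:ℝ) < p := by exact_mod_cast hp2
    have hkf := kIdx_floor hp2 hu
    have hklt := kIdx_lt hp2 u
    have hgt : t < Gp x p u := by
      by_contra hle
      push_neg at hle
      have h1 : kIdx p u < (Finset.univ.filter (fun i => x p i ≤ t)).card := by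
        rw [← sorted_le_iff x hklt t]
        simpa [Gp, gaux, dif_pos hklt] using hle
      have h2 : (Finset.univ.filter (fun i => x p i ≤ t)).card ≤ ⌊(p:ℝ)*u⌋₊ := by
        apply Nat.le_floor
        rw [div_lt_iff₀ hp0] at hp1
        nlinarith
      omega
    exact hct.trans hgt
  · intro c hc
    have hne : (𝓝[Ioo u 1] u).NeBot := by
      rw [← mem_closure_iff_nhdsWithin_neBot, closure_Ioo hu.2.ne]
      exact ⟨le_refl u, hu.2.le⟩
    have hmono : 𝓝[Ioo u 1] u ≤ 𝓝[Ioo (0:ℝ) 1] u :=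
      nhdsWithin_mono _ (fun v hv => ⟨lt_trans hu.1 hv.1, hv.2⟩)
    have hev : ∀ᶠ v in 𝓝[Ioo u 1] u, Qf μ v < c :=
      hmono (hcont.tendsto.eventually (eventually_lt_nhds hc))
    obtain ⟨u', hu'lt, hu'mem⟩ := (hev.and eventually_mem_nhdsWithin).exists
    have hu'Ioo : u' ∈ Ioo (0:ℝ) 1 := ⟨lt_trans hu.1 hu'mem.1, hu'mem.2⟩
    obtain ⟨t, htmem, htat⟩ := exists_nonatom μ (show Qf μ u' < c from hu'lt)
    have hcdft : u < cdf μ t := by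
      have h1 : quantile μ u' ≤ t := by
        rw [← Qf_eq hu'Ioo]
        exact htmem.1.le
      have h2 : u' ≤ cdf μ t := (quantile_le_iff hu'Ioo.1 hu'Ioo.2).1 h1
      exact lt_of_lt_of_le hu'mem.1 h2
    have hev1 := (ecdf_tendsto hconv htat).eventually (eventually_gt_nhds hcdft)
    filter_upwards [hev1, eventually_ge_atTop 1] with p hp1 hp2
    have hp0 : (0:ℝ) < p := by exact_mod_cast hp2
    have hkf := kIdx_floor hp2 hu
    have hklt := kIdx_lt hp2 u
    have hle : Gp x p u ≤ t := by
      have h2 : kIdx p u < (Finset.univ.filter (fun i => x p i ≤ t)).card := by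
        have hfl : (⌊(p:ℝ)*u⌋₊ : ℝ) ≤ (p:ℝ)*u := Nat.floor_le (mul_nonneg hp0.le hu.1.le)
        rw [lt_div_iff₀ hp0] at hp1
        have : ((kIdx p u : ℕ) : ℝ) < ((Finset.univ.filter (fun i => x p i ≤ t)).card : ℝ) := by
          rw [hkf]
          nlinarith
        exact_mod_cast this
      have := (sorted_le_iff x hklt t).2 h2
      simpa [Gp, gaux, dif_pos hklt] using this
    exact lt_of_le_of_lt hle htmem.2

end GH

section HPL

variable {x : (p : ℕ) → Fin p → ℝ} {μ : Measure ℝ} [IsProbabilityMeasure μ]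

lemma vp_facts {p : ℕ} (hp : 1 ≤ p) {u : ℝ} (hu : u ∈ Ioo (0:ℝ) 1) :
    ((kIdx p u : ℝ)+1)/((p:ℝ)+1) ∈ Icc (u/2) ((1+u)/2)
    ∧ ((kIdx p u : ℝ)+1)/((p:ℝ)+1) ∈ Ioo (0:ℝ) 1
    ∧ u - 2/((p:ℝ)+1) ≤ ((kIdx p u : ℝ)+1)/((p:ℝ)+1)
    ∧ ((kIdx p u : ℝ)+1)/((p:ℝ)+1) ≤ u + 2/((p:ℝ)+1) := by
  have hp0 : (0:ℝ) < p := by exact_mod_cast hp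
  have hp1 : (1:ℝ) ≤ p := by exact_mod_cast hp
  have hq0 : (0:ℝ) < (p:ℝ)+1 := by linarith
  have hne : ((p:ℝ)+1) ≠ 0 := hq0.ne'
  have hkf := kIdx_floor hp hu
  have h1 : ((kIdx p u : ℕ):ℝ) ≤ (p:ℝ)*u := by
    rw [hkf]; exact Nat.floor_le (mul_nonneg hp0.le hu.1.le)
  have h2 : (p:ℝ)*u < ((kIdx p u : ℕ):ℝ) + 1 := by
    rw [hkf]; exact Nat.lt_floor_add_one _
  have hk1 : ((kIdx p u : ℕ):ℝ) + 1 ≤ (p:ℝ) := by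
    have := kIdx_lt hp u
    exact_mod_cast this
  have hvmul : (((kIdx p u : ℕ):ℝ)+1)/((p:ℝ)+1) * ((p:ℝ)+1) = ((kIdx p u : ℕ):ℝ)+1 :=
    div_mul_cancel₀ _ hne
  refine ⟨⟨?_, ?_⟩, ⟨by positivity, ?_⟩, ?_, ?_⟩
  · rw [div_le_div_iff₀ (by norm_num) hq0]
    nlinarith [hu.1]
  · rw [div_le_div_iff₀ hq0 (by norm_num : (0:ℝ) < 2)]
    nlinarith [mul_nonneg (by linarith : (0:ℝ) ≤ (p:ℝ) - 1) (by linarith [hu.2] : (0:ℝ) ≤ 1 - u)]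
  · rw [div_lt_one hq0]
    linarith
  · rw [sub_le_iff_le_add, ← add_div, le_div_iff₀ hq0]
    nlinarith [hu.2]
  · have hrhs : (u + 2/((p:ℝ)+1))*((p:ℝ)+1) = u*((p:ℝ)+1) + 2 := by
      field_simp
    rw [div_le_iff₀ hq0, hrhs]
    nlinarith [hu.1]

end HPL

section HPL2

variable {x : (p : ℕ) → Fin p → ℝ} {μ : Measure ℝ} [IsProbabilityMeasure μ]

lemma Hp_tendsto {u : ℝ} (hu : u ∈ Ioo (0:ℝ) 1)
    (hcont : ContinuousWithinAt (Qf μ) (Ioo (0:ℝ) 1) u) :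
    Tendsto (fun p => Hp μ p u) atTop (𝓝 (Qf μ u)) := by
  set v : ℕ → ℝ := fun p => ((kIdx p u : ℝ)+1)/((p:ℝ)+1) with hv
  have hinv : Tendsto (fun p : ℕ => 2/((p:ℝ)+1)) atTop (𝓝 0) :=
    Tendsto.div_atTop tendsto_const_nhds
      (tendsto_atTop_add_const_right _ 1 tendsto_natCast_atTop_atTop)
  have hlow : Tendsto (fun p : ℕ => u - 2/((p:ℝ)+1)) atTop (𝓝 u) := by
    simpa using tendsto_const_nhds.sub hinv
  have hhigh : Tendsto (fun p : ℕ => u + 2/((p:ℝ)+1)) atTop (𝓝 u) := by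
    simpa using tendsto_const_nhds.add hinv
  have hvt : Tendsto v atTop (𝓝 u) :=
    tendsto_of_tendsto_of_tendsto_of_le_of_le' hlow hhigh
      (by filter_upwards [eventually_ge_atTop 1] with p hp
          exact (vp_facts hp hu).2.2.1)
      (by filter_upwards [eventually_ge_atTop 1] with p hp
          exact (vp_facts hp hu).2.2.2)
  have hvmem : ∀ᶠ p in atTop, v p ∈ Ioo (0:ℝ) 1 := by
    filter_upwards [eventually_ge_atTop 1] with p hp
    exact (vp_facts hp hu).2.1
  have hvw : Tendsto v atTop (𝓝[Ioo (0:ℝ) 1] u) := tendsto_nhdsWithin_iff.2 ⟨hvt, hvmem⟩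
  have hcomp := hcont.tendsto.comp hvw
  refine hcomp.congr' ?_
  filter_upwards [hvmem] with p hpmem
  show Qf μ (v p) = Hp μ p u
  rw [Qf_eq hpmem]
  rfl

lemma Hp_bound {p : ℕ} (hp : 1 ≤ p) {u : ℝ} (hu : u ∈ Ioo (0:ℝ) 1) :
    (Hp μ p u - Qf μ u)^2
      ≤ 3*((Qf μ (u/2))^2 + (Qf μ ((1+u)/2))^2 + (Qf μ u)^2) := by
  obtain ⟨hIcc, hIoo, -, -⟩ := vp_facts hp hu
  have hmem1 : u/2 ∈ Ioo (0:ℝ) 1 := ⟨by linarith [hu.1], by linarith [hu.2]⟩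
  have hmem2 : (1+u)/2 ∈ Ioo (0:ℝ) 1 := ⟨by linarith [hu.1], by linarith [hu.2]⟩
  have hHp : Hp μ p u = Qf μ (((kIdx p u : ℝ)+1)/((p:ℝ)+1)) := by
    rw [Qf_eq hIoo]
    rfl
  have hq1 : Qf μ (u/2) ≤ Hp μ p u := by
    rw [hHp]
    exact Qf_monotoneOn hmem1 hIoo hIcc.1
  have hq2 : Hp μ p u ≤ Qf μ ((1+u)/2) := by
    rw [hHp]
    exact Qf_monotoneOn hIoo hmem2 hIcc.2
  set a := Qf μ (u/2)
  set b := Qf μ ((1+u)/2)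
  set Q := Qf μ u
  set H := Hp μ p u
  have habs : |H| ≤ |a| + |b| := by
    rw [abs_le]
    constructor
    · have := neg_abs_le a
      have := abs_nonneg b
      linarith
    · have := le_abs_self b
      have := abs_nonneg a
      linarith
  have htr : |H - Q| ≤ |a| + |b| + |Q| := by
    calc |H - Q| ≤ |H| + |Q| := abs_sub H Q
      _ ≤ |a| + |b| + |Q| := by linarith
  have hsq : (H - Q)^2 ≤ (|a| + |b| + |Q|)^2 := by
    rw [← sq_abs (H - Q)]
    exact pow_le_pow_left₀ (abs_nonneg _) htr 2
  refine hsq.trans ?_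
  have h3 : (|a| + |b| + |Q|)^2 ≤ 3*(|a|^2 + |b|^2 + |Q|^2) := by
    nlinarith [sq_nonneg (|a| - |b|), sq_nonneg (|a| - |Q|), sq_nonneg (|b| - |Q|)]
  rw [sq_abs, sq_abs, sq_abs] at h3
  exact h3

lemma ae_cont (μ : Measure ℝ) [IsProbabilityMeasure μ] :
    ∀ᵐ u ∂(volume.restrict (Ioo (0:ℝ) 1)),
      u ∈ Ioo (0:ℝ) 1 ∧ ContinuousWithinAt (Qf μ) (Ioo (0:ℝ) 1) u := by
  have hmem : ∀ᵐ u ∂(volume.restrict (Ioo (0:ℝ) 1)), u ∈ Ioo (0:ℝ) 1 :=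
    ae_restrict_mem measurableSet_Ioo
  set clampQ : ℕ → ℝ → ℝ :=
    fun n z => Qf μ (min (max z (1/((n:ℝ)+3))) (1 - 1/((n:ℝ)+3))) with hclamp
  have hbnd : ∀ n : ℕ, (0:ℝ) < 1/((n:ℝ)+3) ∧ 1/((n:ℝ)+3) ≤ 1/3 := by
    intro n
    constructor
    · positivity
    · apply div_le_div_of_nonneg_left (by norm_num) (by norm_num)
      · push_cast
        linarith [Nat.cast_nonneg (α := ℝ) n]
  have hmemc : ∀ n : ℕ, ∀ z : ℝ, min (max z (1/((n:ℝ)+3))) (1 - 1/((n:ℝ)+3)) ∈ Ioo (0:ℝ) 1 := by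
    intro n z
    obtain ⟨hb1, hb2⟩ := hbnd n
    constructor
    · have h1 : 1/((n:ℝ)+3) ≤ max z (1/((n:ℝ)+3)) := le_max_right _ _
      have h2 : 1/((n:ℝ)+3) ≤ 1 - 1/((n:ℝ)+3) := by linarith
      have := le_min (h1) h2
      linarith
    · have := min_le_right (max z (1/((n:ℝ)+3))) (1 - 1/((n:ℝ)+3))
      linarith
  have hmono : ∀ n : ℕ, Monotone (clampQ n) := by
    intro n z w hzw
    exact Qf_monotoneOn (hmemc n z) (hmemc n w)
      (min_le_min (max_le_max hzw le_rfl) le_rfl)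
  have hDsub : {u | u ∈ Ioo (0:ℝ) 1 ∧ ¬ ContinuousWithinAt (Qf μ) (Ioo (0:ℝ) 1) u}
      ⊆ ⋃ n : ℕ, {u | ¬ ContinuousAt (clampQ n) u} := by
    rintro u ⟨huIoo, hnc⟩
    obtain ⟨n, hn⟩ := exists_nat_gt (max (1/u) (1/(1-u)))
    have hu0 := huIoo.1
    have hu1 := huIoo.2
    have h1u : 0 < 1 - u := by linarith
    have hn3 : max (1/u) (1/(1-u)) < (n:ℝ) + 3 := by
      push_cast
      linarith [Nat.cast_nonneg (α := ℝ) n]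
    have hnpos : (0:ℝ) < (n:ℝ)+3 := by positivity
    have ha : 1/((n:ℝ)+3) < u := by
      rw [div_lt_iff₀ hnpos]
      have h2 : 1/u < (n:ℝ)+3 := lt_of_le_of_lt (le_max_left _ _) hn3
      rw [div_lt_iff₀ hu0] at h2
      linarith
    have hb : u < 1 - 1/((n:ℝ)+3) := by
      have h2 : 1/(1-u) < (n:ℝ)+3 := lt_of_le_of_lt (le_max_right _ _) hn3
      rw [div_lt_iff₀ h1u] at h2
      have h3 : 1/((n:ℝ)+3) < 1 - u := by
        rw [div_lt_iff₀ hnpos]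
        nlinarith
      linarith
    refine Set.mem_iUnion.2 ⟨n, fun hca => hnc ?_⟩
    have heq : clampQ n =ᶠ[𝓝 u] Qf μ := by
      filter_upwards [Ioo_mem_nhds ha hb] with z hz
      show Qf μ _ = Qf μ z
      rw [max_eq_left hz.1.le, min_eq_left (by linarith [hz.2])]
    exact ((continuousAt_congr heq).1 hca).continuousWithinAt
  have hDcount : {u | u ∈ Ioo (0:ℝ) 1 ∧ ¬ ContinuousWithinAt (Qf μ) (Ioo (0:ℝ) 1) u}.Countable :=
    (Set.countable_iUnion fun n => (hmono n).countable_not_continuousAt).mono hDsub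
  have hDnull : (volume.restrict (Ioo (0:ℝ) 1))
      {u | u ∈ Ioo (0:ℝ) 1 ∧ ¬ ContinuousWithinAt (Qf μ) (Ioo (0:ℝ) 1) u} = 0 :=
    le_antisymm (le_trans (Measure.restrict_le_self _)
      (le_of_eq (hDcount.measure_zero volume))) zero_le
  have h2 := measure_eq_zero_iff_ae_notMem.1 hDnull
  filter_upwards [hmem, h2] with u h1 h3
  refine ⟨h1, ?_⟩
  by_contra hnc
  exact h3 ⟨h1, hnc⟩

end HPL2

section INT

variable {μ : Measure ℝ} [IsProbabilityMeasure μ] {x : (p : ℕ) → Fin p → ℝ}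

lemma integrable_Qf_half (h2int : Integrable (fun t => t ^ 2) μ) :
    Integrable (fun u => (Qf μ (u/2))^2) (volume.restrict (Ioo (0:ℝ) 1)) := by
  have h1 : IntegrableOn (fun v => (Qf μ v)^2) (Ioo (0:ℝ) (1/2)) volume :=
    MeasureTheory.IntegrableOn.mono_set (integrable_sq_Qf h2int)
      (Set.Ioo_subset_Ioo le_rfl (by norm_num))
  have h2 : Integrable ((Ioo (0:ℝ) (1/2)).indicator (fun v => (Qf μ v)^2)) volume :=
    h1.integrable_indicator measurableSet_Ioo
  have h3 : Integrable (fun u => (Ioo (0:ℝ) (1/2)).indicator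
      (fun v => (Qf μ v)^2) (u/2)) volume :=
    (MeasureTheory.integrable_comp_div_iff
      ((Ioo (0:ℝ) (1/2)).indicator (fun v => (Qf μ v)^2)) (two_ne_zero)).2 h2
  refine (h3.restrict (s := Ioo (0:ℝ) 1)).congr ?_
  filter_upwards [ae_restrict_mem measurableSet_Ioo] with u hu
  rw [Set.indicator_of_mem (Set.mem_Ioo.2 ⟨by linarith [hu.1], by linarith [hu.2]⟩)]

lemma integrable_Qf_half2 (h2int : Integrable (fun t => t ^ 2) μ) :
    Integrable (fun u => (Qf μ ((1+u)/2))^2) (volume.restrict (Ioo (0:ℝ) 1)) := by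
  have h1 : IntegrableOn (fun v => (Qf μ v)^2) (Ioo (1/2:ℝ) 1) volume :=
    MeasureTheory.IntegrableOn.mono_set (integrable_sq_Qf h2int)
      (Set.Ioo_subset_Ioo (by norm_num) le_rfl)
  have h2 : Integrable ((Ioo (1/2:ℝ) 1).indicator (fun v => (Qf μ v)^2)) volume :=
    h1.integrable_indicator measurableSet_Ioo
  have h3 : Integrable (fun w => (Ioo (1/2:ℝ) 1).indicator
      (fun v => (Qf μ v)^2) (w/2)) volume :=
    (MeasureTheory.integrable_comp_div_iff
      ((Ioo (1/2:ℝ) 1).indicator (fun v => (Qf μ v)^2)) (two_ne_zero)).2 h2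
  have h4 : Integrable (fun u => (Ioo (1/2:ℝ) 1).indicator
      (fun v => (Qf μ v)^2) ((u - (-1))/2)) volume := h3.comp_sub_right (-1)
  refine (h4.restrict (s := Ioo (0:ℝ) 1)).congr ?_
  filter_upwards [ae_restrict_mem measurableSet_Ioo] with u hu
  have harg : (u - (-1))/2 = (1+u)/2 := by ring
  rw [harg, Set.indicator_of_mem (Set.mem_Ioo.2 ⟨by linarith [hu.1], by linarith [hu.2]⟩)]

lemma integrable_dom (h2int : Integrable (fun t => t ^ 2) μ) :
    Integrable (fun u => 3*((Qf μ (u/2))^2 + (Qf μ ((1+u)/2))^2 + (Qf μ u)^2))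
      (volume.restrict (Ioo (0:ℝ) 1)) :=
  (((integrable_Qf_half h2int).add ((integrable_Qf_half2 h2int))).add
    (integrable_sq_Qf h2int)).const_mul 3

lemma integrable_sq_comp (c : ℕ → ℝ) (p : ℕ) :
    Integrable (fun u => (c (kIdx p u))^2) (volume.restrict (Ioo (0:ℝ) 1)) := by
  refine (integrable_const ((∑ n ∈ Finset.range (p+1), (c n)^2))).mono'
    (((measurable_of_countable (fun n => (c n)^2)).comp
      (measurable_kIdx p)).aestronglyMeasurable) ?_
  filter_upwards with u
  rw [Real.norm_eq_abs, abs_of_nonneg (sq_nonneg _)]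
  refine Finset.single_le_sum (f := fun n => (c n)^2) (fun n _ => sq_nonneg _) ?_
  rw [Finset.mem_range]
  have : kIdx p u ≤ p - 1 := min_le_right _ _
  omega

lemma integrable_sq_sub {ν : Measure ℝ} {f g : ℝ → ℝ} (hfm : AEMeasurable f ν)
    (hgm : AEMeasurable g ν) (hf : Integrable (fun u => f u ^ 2) ν)
    (hg : Integrable (fun u => g u ^ 2) ν) :
    Integrable (fun u => (f u - g u) ^ 2) ν := by
  refine ((hf.const_mul 2).add (hg.const_mul 2)).mono'
    ((hfm.sub hgm).pow_const 2).aestronglyMeasurable ?_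
  filter_upwards with u
  simp only [Pi.add_apply]
  rw [Real.norm_eq_abs, abs_of_nonneg (sq_nonneg _)]
  nlinarith [sq_nonneg (f u + g u)]

lemma Hp_L2 (h2int : Integrable (fun t => t ^ 2) μ) :
    Tendsto (fun p => ∫ u in Ioo (0:ℝ) 1, (Hp μ p u - Qf μ u)^2) atTop (𝓝 0) := by
  rw [← tendsto_add_atTop_iff_nat 1]
  have hDCT := MeasureTheory.tendsto_integral_of_dominated_convergence
      (μ := volume.restrict (Ioo (0:ℝ) 1))
      (F := fun n u => (Hp μ (n+1) u - Qf μ u)^2)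
      (f := fun _ => (0:ℝ))
      (fun u => 3*((Qf μ (u/2))^2 + (Qf μ ((1+u)/2))^2 + (Qf μ u)^2))
      (fun n => (((measurable_Hp μ (n+1)).sub measurable_Qf).pow_const 2).aestronglyMeasurable)
      (integrable_dom h2int)
      (fun n => by
        filter_upwards [ae_restrict_mem measurableSet_Ioo] with u hu
        rw [Real.norm_eq_abs, abs_of_nonneg (sq_nonneg _)]
        exact Hp_bound (Nat.le_add_left 1 n) hu)
      (by
        filter_upwards [ae_cont μ] with u hu
        have h1 := (Hp_tendsto (μ := μ) hu.1 hu.2).comp (tendsto_add_atTop_nat 1)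
        have h2 := (h1.sub_const (Qf μ u)).pow 2
        simpa using h2)
  simpa using hDCT

end INT


theorem statement4
    (x : (p : ℕ) → Fin p → ℝ) (μ : Measure ℝ) (hμ : IsProbabilityMeasure μ)
    (hconv : EmpConverges x μ)
    (h2int : Integrable (fun t => t ^ 2) μ)
    (h2 : Tendsto (fun p => (∑ i, (x p i) ^ 2) / (p : ℝ)) atTop (𝓝 (∫ t, t ^ 2 ∂μ))) :
    Tendsto (fun p => (∑ i : Fin p,
        (x p (Tuple.sort (x p) i) - quantile μ (((i : ℕ) + 1 : ℝ) / ((p : ℝ) + 1))) ^ 2)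
      / (p : ℝ)) atTop (𝓝 0) := by
  set ν := volume.restrict (Ioo (0:ℝ) 1) with hν
  -- sum identity
  have hsum : ∀ p : ℕ, (∑ n ∈ Finset.range p, (gaux x p n)^2) = ∑ i, (x p i)^2 := by
    intro p
    rw [← Fin.sum_univ_eq_sum_range (fun n => (gaux x p n)^2) p,
      ← Equiv.sum_comp (Tuple.sort (x p)) (fun j => x p j ^ 2)]
    refine Finset.sum_congr rfl fun i _ => ?_
    simp [gaux, i.isLt]
  -- a.e. convergence of Gp
  have hae : ∀ᵐ u ∂ν, Tendsto (fun p => Gp x p u) atTop (𝓝 (Qf μ u)) := by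
    filter_upwards [ae_cont μ] with u hu
    exact Gp_tendsto hconv hu.1 hu.2
  have hGpint : ∀ p, Integrable (fun u => (Gp x p u)^2) ν := fun p =>
    integrable_sq_comp (gaux x p) p
  have hGplim : Tendsto (fun p => ∫ u, (Gp x p u)^2 ∂ν) atTop
      (𝓝 (∫ u, (Qf μ u)^2 ∂ν)) := by
    have : (∫ u, (Qf μ u)^2 ∂ν) = ∫ t, t ^ 2 ∂μ := integral_sq_Qf
    rw [this]
    refine h2.congr' ?_
    filter_upwards [eventually_ge_atTop 1] with p hp
    have hstep := step_integral hp (fun n => (gaux x p n)^2)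
    rw [hsum p] at hstep
    exact hstep.symm
  have hGpL2 := riesz_L2 measurable_Qf.aemeasurable
    (fun p => (measurable_Gp x p).aemeasurable) hae (integrable_sq_Qf h2int) hGpint hGplim
  have hHpL2 := Hp_L2 (μ := μ) h2int
  -- integrabilities
  have hHpint : ∀ p, Integrable (fun u => (Hp μ p u)^2) ν := fun p =>
    integrable_sq_comp (Hq μ p) p
  have hGH_int : ∀ p, Integrable (fun u => (Gp x p u - Hp μ p u)^2) ν := fun p =>
    integrable_sq_comp (fun n => gaux x p n - Hq μ p n) p
  have hGQ_int : ∀ p, Integrable (fun u => (Gp x p u - Qf μ u)^2) ν := fun p =>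
    integrable_sq_sub (measurable_Gp x p).aemeasurable measurable_Qf.aemeasurable
      (hGpint p) (integrable_sq_Qf h2int)
  have hHQ_int : ∀ p, Integrable (fun u => (Hp μ p u - Qf μ u)^2) ν := fun p =>
    integrable_sq_sub (measurable_Hp μ p).aemeasurable measurable_Qf.aemeasurable
      (hHpint p) (integrable_sq_Qf h2int)
  -- the squeeze
  have hmain : Tendsto (fun p => ∫ u, (Gp x p u - Hp μ p u)^2 ∂ν) atTop (𝓝 0) := by
    have hub : ∀ p, ∫ u, (Gp x p u - Hp μ p u)^2 ∂ν
        ≤ 2 * (∫ u, (Gp x p u - Qf μ u)^2 ∂ν) + 2 * (∫ u, (Hp μ p u - Qf μ u)^2 ∂ν) := by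
      intro p
      have hint : Integrable (fun u => 2 * (Gp x p u - Qf μ u)^2
          + 2 * (Hp μ p u - Qf μ u)^2) ν :=
        ((hGQ_int p).const_mul 2).add ((hHQ_int p).const_mul 2)
      have hmono := integral_mono (hGH_int p) hint (fun u => by
        nlinarith [sq_nonneg (Gp x p u + Hp μ p u - 2 * Qf μ u)])
      rwa [integral_add ((hGQ_int p).const_mul 2) ((hHQ_int p).const_mul 2),
        integral_const_mul, integral_const_mul] at hmono
    have hlim0 : Tendsto (fun p => 2 * (∫ u, (Gp x p u - Qf μ u)^2 ∂ν)
        + 2 * (∫ u, (Hp μ p u - Qf μ u)^2 ∂ν)) atTop (𝓝 0) := by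
      have := (hGpL2.const_mul 2).add (hHpL2.const_mul 2)
      simpa using this
    refine squeeze_zero' ?_ (Eventually.of_forall hub) hlim0
    exact Eventually.of_forall fun p => integral_nonneg fun u => sq_nonneg _
  -- transfer to the goal
  refine hmain.congr' ?_
  filter_upwards [eventually_ge_atTop 1] with p hp
  have hstep := step_integral hp (fun n => (gaux x p n - Hq μ p n)^2)
  have hsum2 : (∑ n ∈ Finset.range p, (gaux x p n - Hq μ p n)^2)
      = ∑ i : Fin p,
        (x p (Tuple.sort (x p) i) - quantile μ (((i : ℕ) + 1 : ℝ) / ((p : ℝ) + 1))) ^ 2 := by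
    rw [← Fin.sum_univ_eq_sum_range (fun n => (gaux x p n - Hq μ p n)^2) p]
    refine Finset.sum_congr rfl fun i _ => ?_
    simp [gaux, Hq, i.isLt]
  rw [hsum2] at hstep
  exact hstep
end

section
/- In the discrete balance-point setting, fix j with k₂ ≤ j ≤ k₃. Then: (1) aver(i,j) < aver(i−1,j) for every i with i*(j) < i ≤ k₁; (2) aver(i,j) ≥ a_{i−1} for every i with 2 ≤ i ≤ i*(j); (3) aver(i,j) ≥ aver(i−1,j) for every i with 2 ≤ i ≤ i*(j). -/
open Finset

/-- `aver a i j = (∑_{l=i}^j a_l)/(j − i + 1)`. -/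
noncomputable def aver (a : ℕ → ℝ) (i j : ℕ) : ℝ :=
  (∑ l ∈ Finset.Icc i j, a l) / ((j : ℝ) - (i : ℝ) + 1)

open Classical in
/-- The left balance point `i*(j)`. -/
noncomputable def istar (a : ℕ → ℝ) (k₁ j : ℕ) : ℕ :=
  if h : ((Finset.Icc 2 k₁).filter fun i => aver a i j < a (i - 1)).Nonempty
  then ((Finset.Icc 2 k₁).filter fun i => aver a i j < a (i - 1)).min' h - 1
  else k₁

open Classical in
/-- The right balance point `j*`. -/
noncomputable def jstar (a : ℕ → ℝ) (k₁ k₂ k₃ : ℕ) : ℕ :=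
  if h : ((Finset.Icc k₂ (k₃ - 1)).filter fun j => a (j + 1) < aver a (istar a k₁ j) j).Nonempty
  then ((Finset.Icc k₂ (k₃ - 1)).filter fun j => a (j + 1) < aver a (istar a k₁ j) j).max' h + 1
  else k₂

lemma sum_split (a : ℕ → ℝ) {i j : ℕ} (h : i ≤ j) :
    ∑ l ∈ Finset.Icc i j, a l = a i + ∑ l ∈ Finset.Icc (i+1) j, a l := by
  rw [Finset.Icc_add_one_left_eq_Ioc, ← Finset.Ioc_insert_left h, Finset.sum_insert (by simp)]

lemma aver_succ (a : ℕ → ℝ) {m j : ℕ} (h : m + 1 ≤ j) :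
    aver a m j = (a m + ((j:ℝ) - (m+1) + 1) * aver a (m+1) j) / ((j:ℝ) - m + 1) := by
  have hm : m ≤ j := le_trans (Nat.le_succ m) h
  have hc : (m:ℝ) + 1 ≤ (j:ℝ) := by exact_mod_cast h
  have h1 : ((j:ℝ) - ((m:ℝ)+1) + 1) ≠ 0 := by push_cast; nlinarith
  have h2 : ((j:ℝ) - (m:ℝ) + 1) ≠ 0 := by nlinarith
  unfold aver
  rw [sum_split a hm]
  push_cast
  field_simp

lemma L1 (a : ℕ → ℝ) {m j : ℕ} (h : m + 1 ≤ j) (hlt : aver a (m+1) j < a m) :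
    aver a (m+1) j < aver a m j := by
  have hc : (m:ℝ) + 1 ≤ (j:ℝ) := by exact_mod_cast h
  rw [aver_succ a h]
  rw [lt_div_iff₀ (by nlinarith)]
  nlinarith

lemma L2 (a : ℕ → ℝ) {m j : ℕ} (h : m + 1 ≤ j) (hle : a m ≤ aver a (m+1) j) :
    aver a m j ≤ aver a (m+1) j := by
  have hc : (m:ℝ) + 1 ≤ (j:ℝ) := by exact_mod_cast h
  rw [aver_succ a h]
  rw [div_le_iff₀ (by nlinarith)]
  nlinarith

lemma L3 (a : ℕ → ℝ) {m j : ℕ} (h : m + 1 ≤ j) (hlt : aver a m j < a m) :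
    aver a (m+1) j < a m := by
  have hc : (m:ℝ) + 1 ≤ (j:ℝ) := by exact_mod_cast h
  rw [aver_succ a h, div_lt_iff₀ (by nlinarith)] at hlt
  nlinarith

theorem statement5
    (p k₁ k₂ k₃ : ℕ) (a : ℕ → ℝ)
    (hk₁ : 1 ≤ k₁) (hk₁₂ : k₁ < k₂) (hk₂₃ : k₂ ≤ k₃) (hk₃p : k₃ ≤ p)
    (hmono1 : ∀ i, 1 ≤ i → i + 1 ≤ k₁ → a i ≤ a (i + 1))
    (hdec : ∀ i, k₁ ≤ i → i + 1 ≤ k₂ → a (i + 1) < a i)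
    (hmono3 : ∀ i, k₂ ≤ i → i + 1 ≤ k₃ → a i ≤ a (i + 1))
    (j : ℕ) (hj₁ : k₂ ≤ j) (hj₂ : j ≤ k₃) :
    (∀ i, istar a k₁ j < i → i ≤ k₁ → aver a i j < aver a (i - 1) j) ∧
    (∀ i, 2 ≤ i → i ≤ istar a k₁ j → a (i - 1) ≤ aver a i j) ∧
    (∀ i, 2 ≤ i → i ≤ istar a k₁ j → aver a (i - 1) j ≤ aver a i j) := by
  classical
  set S := ((Finset.Icc 2 k₁).filter fun i => aver a i j < a (i - 1)) with hS
  have hk₁j : k₁ < j := lt_of_lt_of_le hk₁₂ hj₁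
  -- helper for part 2: not in S means ≥
  have hnotS : ∀ i, 2 ≤ i → i ≤ k₁ → i ∉ S → a (i - 1) ≤ aver a i j := by
    intro i h2 hk hn
    by_contra hlt
    exact hn (Finset.mem_filter.mpr ⟨Finset.mem_Icc.mpr ⟨h2, hk⟩, not_le.mp hlt⟩)
  by_cases h : S.Nonempty
  · have histar : istar a k₁ j = S.min' h - 1 := by
      unfold istar; rw [dif_pos h]
    set m₀ := S.min' h with hm₀
    have hm₀S : m₀ ∈ S := S.min'_mem h
    have hm₀mem := Finset.mem_filter.mp hm₀S
    obtain ⟨h2m₀, hm₀k₁⟩ := Finset.mem_Icc.mp hm₀mem.1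
    have hPm₀ : aver a m₀ j < a (m₀ - 1) := hm₀mem.2
    have part2 : ∀ i, 2 ≤ i → i ≤ istar a k₁ j → a (i - 1) ≤ aver a i j := by
      intro i h2 hi
      rw [histar] at hi
      have hik : i ≤ k₁ := le_trans hi (le_trans (Nat.sub_le _ _) hm₀k₁)
      refine hnotS i h2 hik (fun hiS => ?_)
      have := S.min'_le i hiS
      omega
    refine ⟨?_, part2, ?_⟩
    · -- part 1
      have key : ∀ i, m₀ ≤ i → i ≤ k₁ → aver a i j < a (i - 1) := by
        intro i hi
        induction i, hi using Nat.le_induction with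
        | base => intro _; exact hPm₀
        | succ i hi ih =>
          intro hik
          have hik' : i ≤ k₁ := le_trans (Nat.le_succ i) hik
          have h1 : aver a i j < a (i - 1) := ih hik'
          have h2i : 2 ≤ i := le_trans h2m₀ hi
          have hmono : a (i - 1) ≤ a i := by
            have := hmono1 (i - 1) (by omega) (by omega)
            have heq : i - 1 + 1 = i := by omega
            rwa [heq] at this
          have h3 : aver a i j < a i := lt_of_lt_of_le h1 hmono
          have h4 : aver a (i+1) j < a i := L3 a (by omega) h3
          simpa using h4
      intro i hi hik
      rw [histar] at hi
      have h2i : 2 ≤ i := by omega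
      have hPi : aver a i j < a (i - 1) := key i (by omega) hik
      obtain ⟨m, rfl⟩ : ∃ m, i = m + 1 := ⟨i - 1, by omega⟩
      simp only [Nat.add_sub_cancel] at hPi ⊢
      exact L1 a (by omega) hPi
    · -- part 3
      intro i h2 hi
      have hge := part2 i h2 hi
      obtain ⟨m, rfl⟩ : ∃ m, i = m + 1 := ⟨i - 1, by omega⟩
      simp only [Nat.add_sub_cancel] at hge ⊢
      have hik : m + 1 ≤ k₁ := by
        rw [histar] at hi; omega
      exact L2 a (by omega) hge
  · have histar : istar a k₁ j = k₁ := by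
      unfold istar; rw [dif_neg h]
    have part2 : ∀ i, 2 ≤ i → i ≤ istar a k₁ j → a (i - 1) ≤ aver a i j := by
      intro i h2 hi
      rw [histar] at hi
      exact hnotS i h2 hi (fun hiS => h ⟨i, hiS⟩)
    refine ⟨?_, part2, ?_⟩
    · intro i hi hik
      rw [histar] at hi; omega
    · intro i h2 hi
      have hge := part2 i h2 hi
      rw [histar] at hi
      obtain ⟨m, rfl⟩ : ∃ m, i = m + 1 := ⟨i - 1, by omega⟩
      simp only [Nat.add_sub_cancel] at hge ⊢
      exact L2 a (by omega) hge
end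

section
/- In the discrete balance-point setting, the map j ↦ aver(i*(j), j) satisfies: (1) aver(i*(j), j) > aver(i*(j+1), j+1) for every j with k₂ ≤ j < j*; (2) aver(i*(j), j) ≤ a_{j+1} for every j with j* ≤ j ≤ k₃ − 1; (3) aver(i*(j), j) ≤ aver(i*(j+1), j+1) for every j with j* ≤ j ≤ k₃ − 1. -/
open Finset

/-! ### Arithmetic lemmas about `aver` -/

lemma aver_key_prepend (a : ℕ → ℝ) {i j : ℕ} (h : i + 1 ≤ j) :
    aver a i j * ((j:ℝ) - i + 1) = a i + ((j:ℝ) - i) * aver a (i+1) j := by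
  have h0 : (i:ℝ) + 1 ≤ (j:ℝ) := by exact_mod_cast h
  have hs : ∑ l ∈ Icc i j, a l = a i + ∑ l ∈ Icc (i+1) j, a l := by
    rw [Finset.Icc_add_one_left_eq_Ioc, ← Finset.add_sum_Ioc_eq_sum_Icc (by omega : i ≤ j)]
  simp only [aver, hs]
  push_cast
  rw [div_mul_cancel₀ _ (by linarith : (j:ℝ) - i + 1 ≠ 0)]
  rw [show (j:ℝ) - ((i:ℝ)+1) + 1 = (j:ℝ) - i by ring]
  rw [mul_div_assoc']
  rw [mul_div_cancel_left₀ _ (by linarith : (j:ℝ) - i ≠ 0)]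

lemma aver_key_append (a : ℕ → ℝ) {i j : ℕ} (h : i ≤ j) :
    aver a i (j+1) * ((j:ℝ) - i + 2) = aver a i j * ((j:ℝ) - i + 1) + a (j+1) := by
  have h0 : (i:ℝ) ≤ (j:ℝ) := by exact_mod_cast h
  have hs : ∑ l ∈ Icc i (j+1), a l = (∑ l ∈ Icc i j, a l) + a (j+1) :=
    Finset.sum_Icc_succ_top (by omega : i ≤ j+1) a
  simp only [aver, hs]
  push_cast
  rw [show ((j:ℝ)+1) - i + 1 = (j:ℝ) - i + 2 by ring]
  rw [div_mul_cancel₀ _ (by linarith : (j:ℝ) - i + 2 ≠ 0)]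
  rw [div_mul_cancel₀ _ (by linarith : (j:ℝ) - i + 1 ≠ 0)]

lemma aver_prepend_le (a : ℕ → ℝ) {i j : ℕ} (h : i + 1 ≤ j)
    (hle : a i ≤ aver a (i+1) j) :
    a i ≤ aver a i j ∧ aver a i j ≤ aver a (i+1) j := by
  have h0 : (i:ℝ) + 1 ≤ (j:ℝ) := by exact_mod_cast h
  have key := aver_key_prepend a h
  have hn : (1:ℝ) ≤ (j:ℝ) - i := by linarith
  constructor
  · nlinarith [mul_le_mul_of_nonneg_left hle (by linarith : (0:ℝ) ≤ (j:ℝ) - i)]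
  · nlinarith [mul_le_mul_of_nonneg_left hle (by linarith : (0:ℝ) ≤ (j:ℝ) - i)]

lemma aver_prepend_lt (a : ℕ → ℝ) {i j : ℕ} (h : i + 1 ≤ j)
    (hlt : aver a (i+1) j < a i) :
    aver a (i+1) j < aver a i j := by
  have h0 : (i:ℝ) + 1 ≤ (j:ℝ) := by exact_mod_cast h
  have key := aver_key_prepend a h
  have hn : (1:ℝ) ≤ (j:ℝ) - i := by linarith
  nlinarith

lemma aver_append_le (a : ℕ → ℝ) {i j : ℕ} (h : i ≤ j) {c : ℝ}
    (h1 : aver a i j ≤ c) (h2 : a (j+1) ≤ c) : aver a i (j+1) ≤ c := by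
  have h0 : (i:ℝ) ≤ (j:ℝ) := by exact_mod_cast h
  have key := aver_key_append a h
  nlinarith

lemma aver_append_lt (a : ℕ → ℝ) {i j : ℕ} (h : i ≤ j) {c : ℝ}
    (h1 : aver a i j ≤ c) (h2 : a (j+1) < c) : aver a i (j+1) < c := by
  have h0 : (i:ℝ) ≤ (j:ℝ) := by exact_mod_cast h
  have key := aver_key_append a h
  nlinarith

lemma aver_append_ge (a : ℕ → ℝ) {i j : ℕ} (h : i ≤ j)
    (h2 : aver a i j ≤ a (j+1)) : aver a i j ≤ aver a i (j+1) := by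
  have h0 : (i:ℝ) ≤ (j:ℝ) := by exact_mod_cast h
  have key := aver_key_append a h
  nlinarith

/-! ### Chain lemmas -/

lemma chain_le (f : ℕ → ℝ) (s : ℕ) :
    ∀ t, (∀ i, s ≤ i → i < t → f i ≤ f (i+1)) → ∀ i, s ≤ i → i ≤ t → f i ≤ f t := by
  intro t
  induction t with
  | zero =>
    intro _ i _ hi
    have : i = 0 := by omega
    subst this; exact le_rfl
  | succ t ih =>
    intro hstep i hs hi
    rcases eq_or_lt_of_le hi with h | h
    · rw [h]
    · exact (ih (fun l hl hlt => hstep l hl (by omega)) i hs (by omega)).trans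
        (hstep t (by omega) (by omega))

lemma chain_lt (f : ℕ → ℝ) (s : ℕ) :
    ∀ t, (∀ i, s ≤ i → i < t → f (i+1) < f i) → s < t → f t < f s := by
  intro t
  induction t with
  | zero => intro _ h; omega
  | succ t ih =>
    intro hstep hst
    rcases eq_or_lt_of_le (Nat.lt_succ_iff.mp hst) with h | h
    · subst h; exact hstep s le_rfl (by omega)
    · exact (hstep t (by omega) (by omega)).trans
        (ih (fun l hl hlt => hstep l hl (by omega)) h)

/-! ### Characterizing `istar` -/

lemma istar_le (a : ℕ → ℝ) (k₁ j : ℕ) : istar a k₁ j ≤ k₁ := by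
  classical
  rw [istar]
  split_ifs with h
  · have hm := Finset.min'_mem _ h
    have := (Finset.mem_Icc.mp (Finset.mem_filter.mp hm).1).2
    omega
  · exact le_rfl

lemma istar_pos (a : ℕ → ℝ) {k₁ : ℕ} (j : ℕ) (hk₁ : 1 ≤ k₁) : 1 ≤ istar a k₁ j := by
  classical
  rw [istar]
  split_ifs with h
  · have hm := Finset.min'_mem _ h
    have := (Finset.mem_Icc.mp (Finset.mem_filter.mp hm).1).1
    omega
  · exact hk₁

lemma istar_not_lt (a : ℕ → ℝ) (k₁ j : ℕ) :
    ∀ i, 2 ≤ i → i ≤ istar a k₁ j → a (i-1) ≤ aver a i j := by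
  classical
  intro i h2 hi
  by_contra hcon
  push_neg at hcon
  rw [istar] at hi
  split_ifs at hi with h
  · have hmem : i ∈ (Finset.Icc 2 k₁).filter fun i => aver a i j < a (i - 1) := by
      refine Finset.mem_filter.mpr ⟨Finset.mem_Icc.mpr ⟨h2, ?_⟩, hcon⟩
      have hm := Finset.min'_mem _ h
      have := (Finset.mem_Icc.mp (Finset.mem_filter.mp hm).1).2
      omega
    have hle := Finset.min'_le _ _ hmem
    have hm := Finset.min'_mem _ h
    have := (Finset.mem_Icc.mp (Finset.mem_filter.mp hm).1).1
    omega
  · exact h ⟨i, Finset.mem_filter.mpr ⟨Finset.mem_Icc.mpr ⟨h2, hi⟩, hcon⟩⟩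

lemma istar_lt (a : ℕ → ℝ) {k₁ j : ℕ} (h : istar a k₁ j < k₁) :
    aver a (istar a k₁ j + 1) j < a (istar a k₁ j) := by
  classical
  by_cases hne : ((Finset.Icc 2 k₁).filter fun i => aver a i j < a (i - 1)).Nonempty
  · have hist : istar a k₁ j
        = ((Finset.Icc 2 k₁).filter fun i => aver a i j < a (i - 1)).min' hne - 1 := by
      rw [istar, dif_pos hne]
    have hmem := Finset.min'_mem _ hne
    have h2 := (Finset.mem_Icc.mp (Finset.mem_filter.mp hmem).1).1
    have hlt := (Finset.mem_filter.mp hmem).2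
    rw [hist, show ((Finset.Icc 2 k₁).filter fun i => aver a i j < a (i - 1)).min' hne - 1 + 1
        = ((Finset.Icc 2 k₁).filter fun i => aver a i j < a (i - 1)).min' hne by omega]
    exact hlt
  · rw [istar, dif_neg hne] at h
    omega

/-- Key lemma: `aver (istar j) j` is the maximum of `aver i j` over `i ∈ [1, k₁]`. -/
lemma aver_le_aver_istar (a : ℕ → ℝ) {k₁ j : ℕ} (hk₁ : 1 ≤ k₁) (hj : k₁ < j)
    (hmono1 : ∀ i, 1 ≤ i → i + 1 ≤ k₁ → a i ≤ a (i + 1)) :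
    ∀ i, 1 ≤ i → i ≤ k₁ → aver a i j ≤ aver a (istar a k₁ j) j := by
  set t := istar a k₁ j with ht
  have htk : t ≤ k₁ := istar_le a k₁ j
  have ht1 : 1 ≤ t := istar_pos a j hk₁
  have up : ∀ i, 1 ≤ i → i ≤ t → aver a i j ≤ aver a t j := by
    refine chain_le (fun i => aver a i j) 1 t ?_
    intro i h1 hit
    have h2 : a ((i+1)-1) ≤ aver a (i+1) j := istar_not_lt a k₁ j (i+1) (by omega) (by omega)
    rw [show i+1-1 = i by omega] at h2
    exact (aver_prepend_le a (by omega : i+1 ≤ j) h2).2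
  have down : ∀ i, t + 1 ≤ i → i ≤ k₁ → aver a i j < a (i-1) := by
    intro i hi1
    induction i, hi1 using Nat.le_induction with
    | base =>
      intro hik
      have := istar_lt a (show istar a k₁ j < k₁ by omega)
      rw [← ht] at this
      rw [show t+1-1 = t by omega]
      exact this
    | succ i hi ih =>
      intro hik
      have hstep := ih (by omega)
      by_contra hcon
      push_neg at hcon
      rw [show i+1-1 = i by omega] at hcon
      have hai := (aver_prepend_le a (by omega : i+1 ≤ j) hcon).1
      have hmm : a (i-1) ≤ a i := by
        have := hmono1 (i-1) (by omega) (by omega)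
        rwa [show i - 1 + 1 = i by omega] at this
      linarith
  have dec : ∀ i, t+1 ≤ i → i ≤ k₁ → aver a i j < aver a t j := by
    intro i hi hik
    refine chain_lt (fun i => aver a i j) t i ?_ (by omega)
    intro l hl hli
    have hd := down (l+1) (by omega) (by omega)
    rw [show l+1-1 = l by omega] at hd
    exact aver_prepend_lt a (by omega : l+1 ≤ j) hd
  intro i h1 hik
  rcases le_or_gt i t with h | h
  · exact up i h1 h
  · exact (dec i (by omega) hik).le

/-! ### Characterizing `jstar` -/

lemma jstar_ge (a : ℕ → ℝ) (k₁ k₂ k₃ : ℕ) : k₂ ≤ jstar a k₁ k₂ k₃ := by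
  classical
  rw [jstar]
  split_ifs with h
  · have := (Finset.mem_Icc.mp (Finset.mem_filter.mp (Finset.max'_mem _ h)).1).1
    omega
  · exact le_rfl

lemma jstar_spec_ge (a : ℕ → ℝ) (k₁ k₂ k₃ : ℕ) :
    ∀ j, jstar a k₁ k₂ k₃ ≤ j → k₂ ≤ j → j ≤ k₃ - 1 →
      aver a (istar a k₁ j) j ≤ a (j+1) := by
  classical
  intro j hj hk2 hk3
  by_contra hcon
  push_neg at hcon
  have hmem : j ∈ (Finset.Icc k₂ (k₃-1)).filter fun j => a (j+1) < aver a (istar a k₁ j) j :=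
    Finset.mem_filter.mpr ⟨Finset.mem_Icc.mpr ⟨hk2, hk3⟩, hcon⟩
  rw [jstar] at hj
  split_ifs at hj with h
  · have := Finset.le_max' _ _ hmem
    omega
  · exact h ⟨j, hmem⟩

lemma jstar_mem (a : ℕ → ℝ) (k₁ k₂ k₃ : ℕ) (h : k₂ < jstar a k₁ k₂ k₃) :
    jstar a k₁ k₂ k₃ - 1 ≤ k₃ - 1 ∧ k₂ ≤ jstar a k₁ k₂ k₃ - 1 ∧
      a (jstar a k₁ k₂ k₃ - 1 + 1)
        < aver a (istar a k₁ (jstar a k₁ k₂ k₃ - 1)) (jstar a k₁ k₂ k₃ - 1) := by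
  classical
  by_cases hne : ((Finset.Icc k₂ (k₃ - 1)).filter
      fun j => a (j + 1) < aver a (istar a k₁ j) j).Nonempty
  · have hj : jstar a k₁ k₂ k₃ = ((Finset.Icc k₂ (k₃ - 1)).filter
        fun j => a (j + 1) < aver a (istar a k₁ j) j).max' hne + 1 := by
      rw [jstar, dif_pos hne]
    have hmem := Finset.max'_mem _ hne
    have hIcc := Finset.mem_Icc.mp (Finset.mem_filter.mp hmem).1
    have hlt := (Finset.mem_filter.mp hmem).2
    rw [hj]
    simp only [Nat.add_sub_cancel]
    exact ⟨hIcc.2, hIcc.1, hlt⟩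
  · rw [jstar, dif_neg hne] at h
    omega

theorem statement6
    (p k₁ k₂ k₃ : ℕ) (a : ℕ → ℝ)
    (hk₁ : 1 ≤ k₁) (hk₁₂ : k₁ < k₂) (hk₂₃ : k₂ ≤ k₃) (hk₃p : k₃ ≤ p)
    (hmono1 : ∀ i, 1 ≤ i → i + 1 ≤ k₁ → a i ≤ a (i + 1))
    (hdec : ∀ i, k₁ ≤ i → i + 1 ≤ k₂ → a (i + 1) < a i)
    (hmono3 : ∀ i, k₂ ≤ i → i + 1 ≤ k₃ → a i ≤ a (i + 1)) :
    (∀ j, k₂ ≤ j → j < jstar a k₁ k₂ k₃ →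
      aver a (istar a k₁ (j + 1)) (j + 1) < aver a (istar a k₁ j) j) ∧
    (∀ j, jstar a k₁ k₂ k₃ ≤ j → j + 1 ≤ k₃ →
      aver a (istar a k₁ j) j ≤ a (j + 1)) ∧
    (∀ j, jstar a k₁ k₂ k₃ ≤ j → j + 1 ≤ k₃ →
      aver a (istar a k₁ j) j ≤ aver a (istar a k₁ (j + 1)) (j + 1)) := by
  have hjge := jstar_ge a k₁ k₂ k₃
  have part2 : ∀ j, jstar a k₁ k₂ k₃ ≤ j → j + 1 ≤ k₃ →
      aver a (istar a k₁ j) j ≤ a (j + 1) := by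
    intro j hj hj3
    exact jstar_spec_ge a k₁ k₂ k₃ j hj (le_trans hjge hj) (by omega)
  have part3 : ∀ j, jstar a k₁ k₂ k₃ ≤ j → j + 1 ≤ k₃ →
      aver a (istar a k₁ j) j ≤ aver a (istar a k₁ (j + 1)) (j + 1) := by
    intro j hj hj3
    have hk2j : k₂ ≤ j := le_trans hjge hj
    have hi0a : 1 ≤ istar a k₁ j := istar_pos a j hk₁
    have hi0b : istar a k₁ j ≤ k₁ := istar_le a k₁ j
    have h1 : aver a (istar a k₁ j) j ≤ a (j+1) := part2 j hj hj3
    have h2 := aver_append_ge a (show istar a k₁ j ≤ j by omega) h1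
    have h3 := aver_le_aver_istar a hk₁ (show k₁ < j + 1 by omega) hmono1
      (istar a k₁ j) hi0a hi0b
    linarith
  refine ⟨?_, part2, part3⟩
  intro j hjk2 hjlt
  have hne : k₂ < jstar a k₁ k₂ k₃ := lt_of_le_of_lt hjk2 hjlt
  obtain ⟨hm3, hm2, hmlt⟩ := jstar_mem a k₁ k₂ k₃ hne
  have claim : ∀ d l, k₂ ≤ l → l + d = jstar a k₁ k₂ k₃ - 1 →
      a (l+1) < aver a (istar a k₁ l) l := by
    intro d
    induction d with
    | zero =>
      intro l hl he
      have : l = jstar a k₁ k₂ k₃ - 1 := by omega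
      subst this
      exact hmlt
    | succ d ih =>
      intro l hl he
      by_contra hcon
      push_neg at hcon
      have hIH := ih (l+1) (by omega) (by omega)
      have hi1a : 1 ≤ istar a k₁ (l+1) := istar_pos a (l+1) hk₁
      have hi1b : istar a k₁ (l+1) ≤ k₁ := istar_le a k₁ (l+1)
      have hAl := aver_le_aver_istar a hk₁ (show k₁ < l by omega) hmono1
        (istar a k₁ (l+1)) hi1a hi1b
      have ha12 : a (l+1) ≤ a (l+1+1) := hmono3 (l+1) (by omega) (by omega)
      have hfin : aver a (istar a k₁ (l+1)) (l+1) ≤ a (l+1+1) :=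
        aver_append_le a (show istar a k₁ (l+1) ≤ l by omega)
          (le_trans hAl (le_trans hcon ha12)) ha12
      linarith
  have hj1 : a (j+1) < aver a (istar a k₁ j) j :=
    claim (jstar a k₁ k₂ k₃ - 1 - j) j hjk2 (by omega)
  have hi1a : 1 ≤ istar a k₁ (j+1) := istar_pos a (j+1) hk₁
  have hi1b : istar a k₁ (j+1) ≤ k₁ := istar_le a k₁ (j+1)
  have hAl := aver_le_aver_istar a hk₁ (show k₁ < j by omega) hmono1
    (istar a k₁ (j+1)) hi1a hi1b
  exact aver_append_lt a (show istar a k₁ (j+1) ≤ j by omega) hAl hj1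
end

section
/- In the continuous balance-point setting, assume in addition that G is continuous on I₁ and on I₃. Fix w ∈ I₃ and suppose v*(w) ∈ (0, b₁). Then, as a function of v ∈ I₁: (1) for all v₁ < v₂ in (v*(w), b₁), T(v₁,w;G) ≥ T(v₂,w;G); (2) T(v*(w), w; G) = G(v*(w)); (3) T(v,w;G) ≥ G(v) for all 0 < v ≤ v*(w); (4) for all v₁ < v₂ in (0, v*(w)), T(v₁,w;G) ≤ T(v₂,w;G). -/
open MeasureTheory Set Filter Topology

/-- `I_T = I₁ ∪ I₂ ∪ I₃ = (0,b₁) ∪ [b₁,b₂] ∪ (b₂,b₃)`, where `b₃` may be `+∞`. -/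
def ITset (b₁ b₂ : ℝ) (b₃ : EReal) : Set ℝ :=
  Ioo 0 b₁ ∪ Icc b₁ b₂ ∪ {y : ℝ | b₂ < y ∧ (y : EReal) < b₃}

/-- The conditioning set `[v,w] ∩ (I_T ∪ {0})` (with possibly infinite right endpoint). -/
def condSet (b₁ b₂ : ℝ) (b₃ : EReal) (v : ℝ) (w : EReal) : Set ℝ :=
  {y : ℝ | v ≤ y ∧ (y : EReal) ≤ w} ∩ (ITset b₁ b₂ b₃ ∪ {0})

/-- The conditional expectation `T(v,w;G) = E[G(Y) | Y ∈ [v,w] ∩ (I_T ∪ {0})]`,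
where `μ` is the law of `Y`. -/
noncomputable def condT (b₁ b₂ : ℝ) (b₃ : EReal) (G : ℝ → ℝ) (μ : Measure ℝ)
    (v : ℝ) (w : EReal) : ℝ :=
  (∫ y in condSet b₁ b₂ b₃ v w, G y ∂μ) / (μ (condSet b₁ b₂ b₃ v w)).toReal

/-- `V_{R,ε}(w) = {v ∈ I₁ : T(v,w;G) < G(v⁻) − ε}`. -/
noncomputable def VR (b₁ b₂ : ℝ) (b₃ : EReal) (G : ℝ → ℝ) (μ : Measure ℝ)
    (ε : ℝ) (w : EReal) : Set ℝ :=
  {v | v ∈ Ioo 0 b₁ ∧ condT b₁ b₂ b₃ G μ v w < Function.leftLim G v - ε}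

open Classical in
/-- `v*_{R,ε}(w)`. -/
noncomputable def vstarR (b₁ b₂ : ℝ) (b₃ : EReal) (G : ℝ → ℝ) (μ : Measure ℝ)
    (ε : ℝ) (w : EReal) : ℝ :=
  if (VR b₁ b₂ b₃ G μ ε w).Nonempty then sInf (VR b₁ b₂ b₃ G μ ε w) else b₁

/-- The left balance point `v*(w) = v*_{R,0}(w)`. -/
noncomputable def vstar (b₁ b₂ : ℝ) (b₃ : EReal) (G : ℝ → ℝ) (μ : Measure ℝ)
    (w : EReal) : ℝ :=
  vstarR b₁ b₂ b₃ G μ 0 w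

/-- `W_{L,ε} = {w ∈ I₃ : T(v*(w),w;G) > G(w⁺) + ε}`. -/
noncomputable def WL (b₁ b₂ : ℝ) (b₃ : EReal) (G : ℝ → ℝ) (μ : Measure ℝ)
    (ε : ℝ) : Set ℝ :=
  {w : ℝ | (b₂ < w ∧ (w : EReal) < b₃) ∧
    Function.rightLim G w + ε < condT b₁ b₂ b₃ G μ (vstar b₁ b₂ b₃ G μ w) w}

open Classical in
/-- `w*_{L,ε}` (an extended real, since `W_{L,ε}` may be unbounded when `b₃ = ∞`). -/
noncomputable def wstarL (b₁ b₂ : ℝ) (b₃ : EReal) (G : ℝ → ℝ) (μ : Measure ℝ)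
    (ε : ℝ) : EReal :=
  if (WL b₁ b₂ b₃ G μ ε).Nonempty
  then sSup ((fun x : ℝ => (x : EReal)) '' WL b₁ b₂ b₃ G μ ε)
  else (b₂ : EReal)

/-- The right balance point `w* = w*_{L,0}`. -/
noncomputable def wstar (b₁ b₂ : ℝ) (b₃ : EReal) (G : ℝ → ℝ) (μ : Measure ℝ) : EReal :=
  wstarL b₁ b₂ b₃ G μ 0

/-- `v* = v*(w*)`. -/
noncomputable def vstarstar (b₁ b₂ : ℝ) (b₃ : EReal) (G : ℝ → ℝ) (μ : Measure ℝ) : ℝ :=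
  vstar b₁ b₂ b₃ G μ (wstar b₁ b₂ b₃ G μ)

theorem statement9
    (b₁ b₂ : ℝ) (b₃ : EReal) (G : ℝ → ℝ) (μ : Measure ℝ)
    (hb₁ : 0 ≤ b₁) (hb₁₂ : b₁ < b₂) (hb₂₃ : (b₂ : EReal) < b₃)
    (hμ : IsProbabilityMeasure μ) (hμneg : μ (Iio 0) = 0)
    (hGint : Integrable G μ)
    (hfull : ∀ a b : ℝ, a < b → Ioo a b ⊆ ITset b₁ b₂ b₃ → 0 < μ (Ioo a b))
    (hG1 : MonotoneOn G (Ioo 0 b₁))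
    (hG2 : StrictAntiOn G (Icc b₁ b₂))
    (hG3 : MonotoneOn G {y : ℝ | b₂ < y ∧ (y : EReal) < b₃})
    (hGc1 : ContinuousOn G (Ioo 0 b₁))
    (hGc3 : ContinuousOn G {y : ℝ | b₂ < y ∧ (y : EReal) < b₃})
    (w : ℝ) (hw : b₂ < w ∧ (w : EReal) < b₃)
    (hv : vstar b₁ b₂ b₃ G μ (w : EReal) ∈ Ioo 0 b₁) :
    (∀ v₁ v₂ : ℝ, vstar b₁ b₂ b₃ G μ (w : EReal) < v₁ → v₁ < v₂ → v₂ < b₁ →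
      condT b₁ b₂ b₃ G μ v₂ (w : EReal) ≤ condT b₁ b₂ b₃ G μ v₁ (w : EReal)) ∧
    (condT b₁ b₂ b₃ G μ (vstar b₁ b₂ b₃ G μ (w : EReal)) (w : EReal)
      = G (vstar b₁ b₂ b₃ G μ (w : EReal))) ∧
    (∀ v : ℝ, 0 < v → v ≤ vstar b₁ b₂ b₃ G μ (w : EReal) →
      G v ≤ condT b₁ b₂ b₃ G μ v (w : EReal)) ∧
    (∀ v₁ v₂ : ℝ, 0 < v₁ → v₁ < v₂ → v₂ < vstar b₁ b₂ b₃ G μ (w : EReal) →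
      condT b₁ b₂ b₃ G μ v₁ (w : EReal) ≤ condT b₁ b₂ b₃ G μ v₂ (w : EReal)) := by

  classical
  obtain ⟨hw2, hw3⟩ := hw
  set T : ℝ → ℝ := fun v => condT b₁ b₂ b₃ G μ v (w : EReal) with hT
  obtain ⟨hv0, hvb⟩ := hv
  set vs := vstar b₁ b₂ b₃ G μ (w : EReal) with hvs
  have hb1w : b₁ < w := hb₁₂.trans hw2
  -- condSet is an interval
  have hcond : ∀ v : ℝ, 0 < v → condSet b₁ b₂ b₃ v (w : EReal) = Icc v w := by
    intro v hv
    ext y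
    constructor
    · rintro ⟨⟨h1, h2⟩, _⟩
      exact ⟨h1, by exact_mod_cast h2⟩
    · rintro ⟨h1, h2⟩
      refine ⟨⟨h1, by exact_mod_cast h2⟩, Or.inl ?_⟩
      by_cases hyb2 : y ≤ b₂
      · by_cases hyb1 : y < b₁
        · exact Or.inl (Or.inl ⟨hv.trans_le h1, hyb1⟩)
        · exact Or.inl (Or.inr ⟨le_of_not_gt hyb1, hyb2⟩)
      · exact Or.inr ⟨lt_of_not_ge hyb2,
          lt_of_le_of_lt (by exact_mod_cast h2 : (y : EReal) ≤ (w : EReal)) hw3⟩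
  have hTdef : ∀ v : ℝ, 0 < v →
      T v = (∫ y in Icc v w, G y ∂μ) / (μ (Icc v w)).toReal := by
    intro v hv
    simp only [hT, condT, hcond v hv]
  have hGI : ∀ s : Set ℝ, IntegrableOn G s μ := fun s => hGint.integrableOn
  have hDpos : ∀ v : ℝ, 0 < v → v < b₁ → 0 < (μ (Icc v w)).toReal := by
    intro v h0 h1
    refine ENNReal.toReal_pos (fun h => ?_) (measure_ne_top μ _)
    have hsub : Ioo v b₁ ⊆ Icc v w := fun y hy =>
      ⟨hy.1.le, hy.2.le.trans (hb₁₂.trans hw2).le⟩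
    have hpos := hfull v b₁ h1 (fun y hy => Or.inl (Or.inl ⟨h0.trans hy.1, hy.2⟩))
    exact absurd (le_trans (measure_mono hsub) h.le) (not_le.mpr hpos)
  have hapos : ∀ v₁ v₂ : ℝ, 0 < v₁ → v₁ < v₂ → v₂ ≤ b₁ →
      0 < (μ (Ico v₁ v₂)).toReal := by
    intro v₁ v₂ h0 h12 h2b
    refine ENNReal.toReal_pos (fun h => ?_) (measure_ne_top μ _)
    have hpos := hfull v₁ v₂ h12
      (fun y hy => Or.inl (Or.inl ⟨h0.trans hy.1, hy.2.trans_le h2b⟩))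
    exact absurd (le_trans (measure_mono Set.Ioo_subset_Ico_self) h.le)
      (not_le.mpr hpos)
  have hdisj : ∀ v₁ v₂ : ℝ, Disjoint (Ico v₁ v₂) (Icc v₂ w) :=
    fun v₁ v₂ => Set.disjoint_left.mpr fun y h1 h2 => absurd h2.1 (not_le.mpr h1.2)
  have hdecompN : ∀ v₁ v₂ : ℝ, v₁ ≤ v₂ → v₂ ≤ w →
      ∫ y in Icc v₁ w, G y ∂μ
        = (∫ y in Ico v₁ v₂, G y ∂μ) + ∫ y in Icc v₂ w, G y ∂μ := by
    intro v₁ v₂ h12 h2w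
    rw [← Set.Ico_union_Icc_eq_Icc h12 h2w,
      setIntegral_union (hdisj v₁ v₂) measurableSet_Icc (hGI _) (hGI _)]
  have hdecompD : ∀ v₁ v₂ : ℝ, v₁ ≤ v₂ → v₂ ≤ w →
      (μ (Icc v₁ w)).toReal
        = (μ (Ico v₁ v₂)).toReal + (μ (Icc v₂ w)).toReal := by
    intro v₁ v₂ h12 h2w
    rw [← Set.Ico_union_Icc_eq_Icc h12 h2w,
      measure_union (hdisj v₁ v₂) measurableSet_Icc,
      ENNReal.toReal_add (measure_ne_top μ _) (measure_ne_top μ _)]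
  -- integral bounds on chunks
  have hIub : ∀ v₁ v₂ : ℝ, 0 < v₁ → v₁ < v₂ → v₂ < b₁ →
      ∫ y in Ico v₁ v₂, G y ∂μ ≤ (μ (Ico v₁ v₂)).toReal * G v₂ := by
    intro v₁ v₂ h0 h12 h2b
    calc ∫ y in Ico v₁ v₂, G y ∂μ ≤ ∫ _y in Ico v₁ v₂, G v₂ ∂μ :=
          setIntegral_mono_on (hGI _)
            (integrableOn_const (measure_ne_top μ _))
            measurableSet_Ico
            (fun y hy => hG1 ⟨h0.trans_le hy.1, hy.2.trans h2b⟩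
              ⟨h0.trans h12, h2b⟩ hy.2.le)
      _ = (μ (Ico v₁ v₂)).toReal * G v₂ := by
          rw [setIntegral_const]; simp [smul_eq_mul, measureReal_def]
  have hIlb : ∀ v₁ v₂ : ℝ, 0 < v₁ → v₁ < v₂ → v₂ ≤ b₁ →
      (μ (Ico v₁ v₂)).toReal * G v₁ ≤ ∫ y in Ico v₁ v₂, G y ∂μ := by
    intro v₁ v₂ h0 h12 h2b
    calc (μ (Ico v₁ v₂)).toReal * G v₁ = ∫ _y in Ico v₁ v₂, G v₁ ∂μ := by
          rw [setIntegral_const]; simp [smul_eq_mul, measureReal_def]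
      _ ≤ ∫ y in Ico v₁ v₂, G y ∂μ :=
          setIntegral_mono_on
            (integrableOn_const (measure_ne_top μ _))
            (hGI _) measurableSet_Ico
            (fun y hy => hG1 ⟨h0, h12.trans_le h2b⟩
              ⟨h0.trans_le hy.1, hy.2.trans_le h2b⟩ hy.1)
  -- key monotonicity lemmas
  have key_up : ∀ v₁ v₂ : ℝ, 0 < v₁ → v₁ < v₂ → v₂ < b₁ →
      G v₂ ≤ T v₂ → T v₁ ≤ T v₂ := by
    intro v₁ v₂ h0 h12 h2b hGe
    have h0₂ : 0 < v₂ := h0.trans h12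
    have h2w : v₂ ≤ w := (h2b.trans hb1w).le
    have hb : 0 < (μ (Icc v₂ w)).toReal := hDpos v₂ h0₂ h2b
    have ha : (0:ℝ) ≤ (μ (Ico v₁ v₂)).toReal := ENNReal.toReal_nonneg
    have hA := hIub v₁ v₂ h0 h12 h2b
    rw [hTdef v₂ h0₂] at hGe ⊢
    rw [hTdef v₁ h0, hdecompN v₁ v₂ h12.le h2w, hdecompD v₁ v₂ h12.le h2w]
    rw [div_le_div_iff₀ (by linarith) hb]
    have hGe' : G v₂ * (μ (Icc v₂ w)).toReal ≤ ∫ y in Icc v₂ w, G y ∂μ :=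
      (le_div_iff₀ hb).mp hGe
    nlinarith [mul_le_mul_of_nonneg_right hA hb.le,
      mul_le_mul_of_nonneg_left hGe' ha]
  have key_down : ∀ v₁ v₂ : ℝ, 0 < v₁ → v₁ < v₂ → v₂ < b₁ →
      T v₁ ≤ G v₁ → T v₂ ≤ T v₁ := by
    intro v₁ v₂ h0 h12 h2b hLe
    have h0₂ : 0 < v₂ := h0.trans h12
    have h2w : v₂ ≤ w := (h2b.trans hb1w).le
    have hb : 0 < (μ (Icc v₂ w)).toReal := hDpos v₂ h0₂ h2b
    have ha : (0:ℝ) ≤ (μ (Ico v₁ v₂)).toReal := ENNReal.toReal_nonneg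
    have hA := hIlb v₁ v₂ h0 h12 h2b.le
    rw [hTdef v₂ h0₂]
    rw [hTdef v₁ h0, hdecompN v₁ v₂ h12.le h2w, hdecompD v₁ v₂ h12.le h2w] at hLe ⊢
    rw [div_le_div_iff₀ hb (by linarith)]
    have hLe' : (∫ y in Ico v₁ v₂, G y ∂μ) + ∫ y in Icc v₂ w, G y ∂μ
        ≤ G v₁ * ((μ (Ico v₁ v₂)).toReal + (μ (Icc v₂ w)).toReal) :=
      (div_le_iff₀ (by linarith)).mp hLe
    nlinarith [mul_le_mul_of_nonneg_right hA hb.le]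
  have key_strict : ∀ v₁ v₂ : ℝ, 0 < v₁ → v₁ < v₂ → v₂ < b₁ →
      T v₂ < G v₂ → T v₁ < G v₂ := by
    intro v₁ v₂ h0 h12 h2b hLt
    have h0₂ : 0 < v₂ := h0.trans h12
    have h2w : v₂ ≤ w := (h2b.trans hb1w).le
    have hb : 0 < (μ (Icc v₂ w)).toReal := hDpos v₂ h0₂ h2b
    have ha : (0:ℝ) ≤ (μ (Ico v₁ v₂)).toReal := ENNReal.toReal_nonneg
    have hA := hIub v₁ v₂ h0 h12 h2b
    rw [hTdef v₂ h0₂] at hLt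
    rw [hTdef v₁ h0, hdecompN v₁ v₂ h12.le h2w, hdecompD v₁ v₂ h12.le h2w]
    rw [div_lt_iff₀ (by linarith)]
    have hLt' : ∫ y in Icc v₂ w, G y ∂μ < G v₂ * (μ (Icc v₂ w)).toReal :=
      (div_lt_iff₀ hb).mp hLt
    nlinarith
  -- facts about V and vs
  set V := VR b₁ b₂ b₃ G μ 0 (w : EReal) with hV
  have hVne : V.Nonempty := by
    by_contra h
    rw [hvs, vstar, vstarR, if_neg h] at hvb
    exact lt_irrefl b₁ hvb
  have hvInf : vs = sInf V := by rw [hvs, vstar, vstarR, if_pos hVne]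
  have hbdd : BddBelow V := ⟨0, fun v hv => hv.1.1.le⟩
  have hnotmem : ∀ v : ℝ, v < vs → v ∉ V := by
    intro v hlt hmem
    exact absurd (csInf_le hbdd hmem) (not_le.mpr (hvInf ▸ hlt))
  have hleft : ∀ v ∈ Ioo (0:ℝ) b₁, Function.leftLim G v = G v := by
    intro v hvI
    have hc : ContinuousAt G v := hGc1.continuousAt (Ioo_mem_nhds hvI.1 hvI.2)
    exact leftLim_eq_of_tendsto
      (hc.continuousWithinAt.tendsto)
  have hmemV : ∀ v : ℝ, v ∈ Ioo (0:ℝ) b₁ → T v < G v → v ∈ V := by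
    intro v hvI hlt
    exact ⟨hvI, by rw [hleft v hvI, sub_zero]; exact hlt⟩
  have hT_ge : ∀ v : ℝ, 0 < v → v < vs → G v ≤ T v := by
    intro v h0 h1
    by_contra h
    exact hnotmem v h1 (hmemV v ⟨h0, h1.trans hvb⟩ (not_le.mp h))
  have hmemV' : ∀ v ∈ V, T v < G v := by
    intro v hv
    have := hv.2
    rwa [hleft v hv.1, sub_zero] at this
  have hcont : ContinuousAt G vs := hGc1.continuousAt (Ioo_mem_nhds hv0 hvb)
  -- claim 2 : T vs = G vs
  have claim2 : T vs = G vs := by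
    have h2le : T vs ≤ G vs := by
      by_contra h
      push_neg at h
      obtain ⟨δ₂, hδ₂, hball⟩ := Metric.continuousAt_iff.mp hcont (T vs - G vs)
        (by linarith)
      obtain ⟨u, huV, hu⟩ := exists_lt_of_csInf_lt hVne
        (show sInf V < vs + δ₂ by rw [← hvInf]; linarith)
      have huge : vs ≤ u := hvInf ▸ csInf_le hbdd huV
      have hTu : T u < G u := hmemV' u huV
      rcases eq_or_lt_of_le huge with heq | hlt
      · rw [← heq] at hTu; linarith
      · have hTs : T vs < G u := key_strict vs u hv0 hlt huV.1.2 hTu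
        have hd : dist u vs < δ₂ := by
          rw [Real.dist_eq, abs_of_nonneg (by linarith)]; linarith
        have := hball hd
        rw [Real.dist_eq, abs_lt] at this
        linarith
    have h2ge : G vs ≤ T vs := by
      by_contra h
      push_neg at h
      set δ := G vs - T vs with hδ
      have hδpos : 0 < δ := by rw [hδ]; linarith
      set v₀ : ℝ := vs / 2 with hv₀
      have hv₀pos : 0 < v₀ := by positivity
      have hv₀lt : v₀ < vs := by rw [hv₀]; linarith
      set a₀ : ℝ := (μ (Ico v₀ vs)).toReal with ha₀
      have ha₀nn : 0 ≤ a₀ := ENNReal.toReal_nonneg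
      set bb : ℝ := (μ (Icc vs w)).toReal with hbb
      have hbbpos : 0 < bb := hDpos vs hv0 hvb
      set c : ℝ := bb * δ / (a₀ + bb) with hc
      have hcpos : 0 < c := by positivity
      obtain ⟨δ₂, hδ₂, hball⟩ := Metric.continuousAt_iff.mp hcont c hcpos
      set v : ℝ := max v₀ (vs - δ₂ / 2) with hvdef
      have h0v : 0 < v := lt_of_lt_of_le hv₀pos (le_max_left _ _)
      have hvlt : v < vs := max_lt hv₀lt (by linarith)
      have hvge : v₀ ≤ v := le_max_left _ _
      have hd : dist v vs < δ₂ := by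
        rw [Real.dist_eq, abs_of_nonpos (by linarith)]
        have := le_max_right v₀ (vs - δ₂ / 2)
        simp only [hvdef] at *
        linarith [le_max_right v₀ (vs - δ₂ / 2)]
      have hGv : G vs - c < G v := by
        have := hball hd
        rw [Real.dist_eq, abs_lt] at this
        linarith [this.1]
      -- bound T v
      have h2w : vs ≤ w := (hvb.trans hb1w).le
      have ha_le : (μ (Ico v vs)).toReal ≤ a₀ := by
        rw [ha₀]
        exact ENNReal.toReal_le_toReal (measure_ne_top μ _) (measure_ne_top μ _)
          |>.mpr (measure_mono (Set.Ico_subset_Ico_left hvge))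
      have hann : (0:ℝ) ≤ (μ (Ico v vs)).toReal := ENNReal.toReal_nonneg
      have hA : ∫ y in Ico v vs, G y ∂μ ≤ (μ (Ico v vs)).toReal * G vs :=
        hIub v vs h0v hvlt hvb
      have hNs : ∫ y in Icc vs w, G y ∂μ = bb * T vs := by
        rw [hTdef vs hv0, ← hbb, mul_div_cancel₀ _ (ne_of_gt hbbpos)]
      have hTv : T v ≤ G vs - c := by
        rw [hTdef v h0v, hdecompN v vs hvlt.le h2w, hdecompD v vs hvlt.le h2w,
          hNs, ← hbb]
        rw [div_le_iff₀ (by linarith)]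
        have hcmul : c * (a₀ + bb) = bb * δ := by
          rw [hc, div_mul_cancel₀ _ (by positivity)]
        nlinarith [mul_le_mul_of_nonneg_left ha_le hcpos.le]
      exact hnotmem v hvlt (hmemV v ⟨h0v, hvlt.trans hvb⟩ (by linarith))
    linarith
  -- claim 1 preliminary : T ≤ G past vs
  have hTle : ∀ v : ℝ, vs < v → v < b₁ → T v ≤ G v := by
    intro v h1 h2
    obtain ⟨u, huV, hu⟩ := exists_lt_of_csInf_lt hVne
      (show sInf V < v by rw [← hvInf]; exact h1)
    have huge : vs ≤ u := hvInf ▸ csInf_le hbdd huV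
    have hTu : T u < G u := hmemV' u huV
    have hGuv : G u ≤ G v := hG1 huV.1 ⟨hv0.trans h1, h2⟩ hu.le
    have := key_down u v huV.1.1 hu h2 hTu.le
    linarith
  refine ⟨?_, claim2, ?_, ?_⟩
  · intro v₁ v₂ h1 h12 h2b
    exact key_down v₁ v₂ (hv0.trans h1) h12 h2b (hTle v₁ h1 (h12.trans h2b))
  · intro v h0 hle
    rcases eq_or_lt_of_le hle with heq | hlt
    · rw [heq]; exact claim2.ge
    · exact hT_ge v h0 hlt
  · intro v₁ v₂ h0 h12 h2
    exact key_up v₁ v₂ h0 h12 (h2.trans hvb) (hT_ge v₂ (h0.trans h12) h2)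
end

section
/- In the continuous balance-point setting, assume in addition that G is continuous on [0, b₁) and on I₃. Then for every w ∈ I₃ and every ε > 0: |T(v*_{R,ε}(w), w; G) − T(v*(w), w; G)| ≤ ε and |T(v*_{L,ε}(w), w; G) − T(v*(w), w; G)| ≤ ε. -/
open MeasureTheory Set Filter Topology
/-- `V_{L,ε}(w) = {v ∈ I₁ : G(v) < T(v*(w),w;G) − ε}`. -/
noncomputable def VL (b₁ b₂ : ℝ) (b₃ : EReal) (G : ℝ → ℝ) (μ : Measure ℝ)
    (ε : ℝ) (w : EReal) : Set ℝ :=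
  {v | v ∈ Ioo 0 b₁ ∧ G v < condT b₁ b₂ b₃ G μ (vstar b₁ b₂ b₃ G μ w) w - ε}

open Classical in
/-- `v*_{L,ε}(w)`. -/
noncomputable def vstarL (b₁ b₂ : ℝ) (b₃ : EReal) (G : ℝ → ℝ) (μ : Measure ℝ)
    (ε : ℝ) (w : EReal) : ℝ :=
  if (VL b₁ b₂ b₃ G μ ε w).Nonempty then sSup (VL b₁ b₂ b₃ G μ ε w) else 0

section Aux12

open MeasureTheory Set Filter Topology

private lemma mem_condSet_iff {b₁ b₂ : ℝ} {b₃ : EReal} {v : ℝ} {w : EReal} {y : ℝ} :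
    y ∈ condSet b₁ b₂ b₃ v w ↔
      (v ≤ y ∧ (y : EReal) ≤ w) ∧
        ((0 < y ∧ y < b₁) ∨ (b₁ ≤ y ∧ y ≤ b₂) ∨ (b₂ < y ∧ (y : EReal) < b₃) ∨ y = 0) := by
  simp only [condSet, ITset, mem_inter_iff, mem_setOf_eq, mem_union, mem_Ioo, mem_Icc,
    mem_singleton_iff]
  tauto

private lemma ITset_measurable (b₁ b₂ : ℝ) (b₃ : EReal) : MeasurableSet (ITset b₁ b₂ b₃) := by
  have h3 : {y : ℝ | b₂ < y ∧ (y : EReal) < b₃} =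
      Ioi b₂ ∩ (Real.toEReal ⁻¹' (Iio b₃)) := rfl
  unfold ITset
  rw [h3]
  exact (measurableSet_Ioo.union measurableSet_Icc).union
    (measurableSet_Ioi.inter (continuous_coe_real_ereal.measurable measurableSet_Iio))

private lemma condSet_measurable (b₁ b₂ : ℝ) (b₃ : EReal) (v : ℝ) (w : EReal) :
    MeasurableSet (condSet b₁ b₂ b₃ v w) := by
  have h1 : {y : ℝ | v ≤ y ∧ (y : EReal) ≤ w} = Ici v ∩ (Real.toEReal ⁻¹' (Iic w)) := rfl
  unfold condSet
  rw [h1]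
  exact (measurableSet_Ici.inter (continuous_coe_real_ereal.measurable measurableSet_Iic)).inter
    ((ITset_measurable b₁ b₂ b₃).union (measurableSet_singleton 0))

private lemma condSet_anti (b₁ b₂ : ℝ) (b₃ : EReal) (w : EReal) {v v' : ℝ} (h : v ≤ v') :
    condSet b₁ b₂ b₃ v' w ⊆ condSet b₁ b₂ b₃ v w := by
  intro y hy
  rw [mem_condSet_iff] at *
  exact ⟨⟨h.trans hy.1.1, hy.1.2⟩, hy.2⟩

private lemma Ioo_subset_condSet {b₁ b₂ : ℝ} (b₃ : EReal) {v : ℝ} {w : EReal}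
    (hv : v ≤ b₁) (hw : (b₂ : EReal) ≤ w) : Ioo b₁ b₂ ⊆ condSet b₁ b₂ b₃ v w := by
  intro y hy
  rw [mem_condSet_iff]
  exact ⟨⟨hv.trans hy.1.le, le_trans (le_of_lt (EReal.coe_lt_coe_iff.2 hy.2)) hw⟩,
    Or.inr (Or.inl ⟨hy.1.le, hy.2.le⟩)⟩

private lemma diff_cases {b₁ b₂ : ℝ} {b₃ : EReal} {w : EReal} {v v' y : ℝ}
    (hb1 : 0 < b₁) (hb₁₂ : b₁ < b₂) (hv'b : v' ≤ b₁)
    (hy : y ∈ condSet b₁ b₂ b₃ v w \ condSet b₁ b₂ b₃ v' w) :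
    v ≤ y ∧ y < v' ∧ y ∈ Ico 0 b₁ ∧ (0 < y → y ∈ Ioo 0 b₁) := by
  obtain ⟨hy1, hy2⟩ := hy
  rw [mem_condSet_iff] at hy1
  obtain ⟨⟨hvy, hyw⟩, hmem⟩ := hy1
  have hyv' : y < v' := by
    by_contra h
    push_neg at h
    exact hy2 (mem_condSet_iff.2 ⟨⟨h, hyw⟩, hmem⟩)
  refine ⟨hvy, hyv', ?_⟩
  rcases hmem with h | h | h | h
  · exact ⟨⟨h.1.le, h.2⟩, fun _ => h⟩
  · exfalso; linarith [h.1]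
  · exfalso; linarith [h.1]
  · subst h
    exact ⟨⟨le_refl 0, hb1⟩, fun h0 => (lt_irrefl 0 h0).elim⟩

private lemma keyK_aux {G : ℝ → ℝ} {μ : Measure ℝ} [IsFiniteMeasure μ] (hG : Integrable G μ)
    {A C : Set ℝ} (hA : MeasurableSet A) (hC : MeasurableSet C) (hAC : A ⊆ C) (hμA : μ A ≠ 0) :
    (∫ y in A, G y ∂μ) / (μ A).toReal - (∫ y in C, G y ∂μ) / (μ C).toReal
      = ((μ (C \ A)).toReal * ((∫ y in A, G y ∂μ) / (μ A).toReal) - ∫ y in C \ A, G y ∂μ)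
          / (μ C).toReal
      ∧ (μ C).toReal = (μ A).toReal + (μ (C \ A)).toReal ∧ 0 < (μ A).toReal := by
  have hB : MeasurableSet (C \ A) := hC.diff hA
  have hUn : A ∪ C \ A = C := union_diff_cancel hAC
  have hmC : μ C = μ A + μ (C \ A) := by
    conv_lhs => rw [← hUn]
    exact measure_union disjoint_sdiff_self_right hB
  have hmCtr : (μ C).toReal = (μ A).toReal + (μ (C \ A)).toReal := by
    rw [hmC, ENNReal.toReal_add (measure_ne_top _ _) (measure_ne_top _ _)]
  have hIC : (∫ y in C, G y ∂μ) = (∫ y in A, G y ∂μ) + ∫ y in C \ A, G y ∂μ := by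
    conv_lhs => rw [← hUn]
    exact setIntegral_union disjoint_sdiff_self_right hB hG.integrableOn hG.integrableOn
  have hmA : 0 < (μ A).toReal := ENNReal.toReal_pos hμA (measure_ne_top _ _)
  have hmB : (0:ℝ) ≤ (μ (C \ A)).toReal := ENNReal.toReal_nonneg
  refine ⟨?_, hmCtr, hmA⟩
  rw [hIC, hmCtr]
  have h1 : (μ A).toReal ≠ 0 := ne_of_gt hmA
  have h2 : (μ A).toReal + (μ (C \ A)).toReal ≠ 0 := by positivity
  field_simp
  ring

private lemma keyK_ge {G : ℝ → ℝ} {μ : Measure ℝ} [IsFiniteMeasure μ] (hG : Integrable G μ)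
    {A C : Set ℝ} (hA : MeasurableSet A) (hC : MeasurableSet C) (hAC : A ⊆ C) (hμA : μ A ≠ 0)
    {c₂ : ℝ} (h₂ : ∀ y ∈ C \ A, G y ≤ c₂) :
    (μ (C \ A)).toReal / (μ C).toReal * ((∫ y in A, G y ∂μ) / (μ A).toReal - c₂)
      ≤ (∫ y in A, G y ∂μ) / (μ A).toReal - (∫ y in C, G y ∂μ) / (μ C).toReal := by
  obtain ⟨hkey, hmCtr, hmA⟩ := keyK_aux hG hA hC hAC hμA
  have hmB : (0:ℝ) ≤ (μ (C \ A)).toReal := ENNReal.toReal_nonneg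
  have hmC : 0 < (μ C).toReal := by rw [hmCtr]; positivity
  have hb : (∫ y in C \ A, G y ∂μ) ≤ c₂ * (μ (C \ A)).toReal := by
    have h := setIntegral_mono_on hG.integrableOn
      (integrableOn_const (measure_ne_top _ _)) (hC.diff hA) h₂
    rwa [setIntegral_const, smul_eq_mul, mul_comm] at h
  rw [hkey]
  have hnum : (μ (C \ A)).toReal * ((∫ y in A, G y ∂μ) / (μ A).toReal - c₂)
      ≤ (μ (C \ A)).toReal * ((∫ y in A, G y ∂μ) / (μ A).toReal) - ∫ y in C \ A, G y ∂μ := by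
    nlinarith [hb]
  calc (μ (C \ A)).toReal / (μ C).toReal * ((∫ y in A, G y ∂μ) / (μ A).toReal - c₂)
      = (μ (C \ A)).toReal * ((∫ y in A, G y ∂μ) / (μ A).toReal - c₂) * ((μ C).toReal)⁻¹ := by
        ring
    _ ≤ ((μ (C \ A)).toReal * ((∫ y in A, G y ∂μ) / (μ A).toReal) - ∫ y in C \ A, G y ∂μ)
          * ((μ C).toReal)⁻¹ := by
        exact mul_le_mul_of_nonneg_right hnum (by positivity)
    _ = ((μ (C \ A)).toReal * ((∫ y in A, G y ∂μ) / (μ A).toReal) - ∫ y in C \ A, G y ∂μ)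
          / (μ C).toReal := by
        ring

private lemma keyK_le {G : ℝ → ℝ} {μ : Measure ℝ} [IsFiniteMeasure μ] (hG : Integrable G μ)
    {A C : Set ℝ} (hA : MeasurableSet A) (hC : MeasurableSet C) (hAC : A ⊆ C) (hμA : μ A ≠ 0)
    {c₁ : ℝ} (h₁ : ∀ y ∈ C \ A, c₁ ≤ G y) :
    (∫ y in A, G y ∂μ) / (μ A).toReal - (∫ y in C, G y ∂μ) / (μ C).toReal
      ≤ (μ (C \ A)).toReal / (μ C).toReal * ((∫ y in A, G y ∂μ) / (μ A).toReal - c₁) := by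
  obtain ⟨hkey, hmCtr, hmA⟩ := keyK_aux hG hA hC hAC hμA
  have hmB : (0:ℝ) ≤ (μ (C \ A)).toReal := ENNReal.toReal_nonneg
  have hmC : 0 < (μ C).toReal := by rw [hmCtr]; positivity
  have hb : c₁ * (μ (C \ A)).toReal ≤ ∫ y in C \ A, G y ∂μ := by
    have h := setIntegral_mono_on (integrableOn_const (measure_ne_top _ _))
      hG.integrableOn (hC.diff hA) h₁
    rwa [setIntegral_const, smul_eq_mul, mul_comm] at h
  rw [hkey]
  have hnum : (μ (C \ A)).toReal * ((∫ y in A, G y ∂μ) / (μ A).toReal) - (∫ y in C \ A, G y ∂μ)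
      ≤ (μ (C \ A)).toReal * ((∫ y in A, G y ∂μ) / (μ A).toReal - c₁) := by
    nlinarith [hb]
  calc ((μ (C \ A)).toReal * ((∫ y in A, G y ∂μ) / (μ A).toReal) - ∫ y in C \ A, G y ∂μ)
          / (μ C).toReal
      = ((μ (C \ A)).toReal * ((∫ y in A, G y ∂μ) / (μ A).toReal) - ∫ y in C \ A, G y ∂μ)
          * ((μ C).toReal)⁻¹ := by ring
    _ ≤ ((μ (C \ A)).toReal * ((∫ y in A, G y ∂μ) / (μ A).toReal - c₁)) * ((μ C).toReal)⁻¹ :=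
        mul_le_mul_of_nonneg_right hnum (by positivity)
    _ = (μ (C \ A)).toReal / (μ C).toReal * ((∫ y in A, G y ∂μ) / (μ A).toReal - c₁) := by
        ring

private lemma q_le_one (μ : Measure ℝ) [IsFiniteMeasure μ] (A C : Set ℝ) :
    (μ (C \ A)).toReal / (μ C).toReal ≤ 1 :=
  div_le_one_of_le₀ (ENNReal.toReal_mono (measure_ne_top _ _) (measure_mono diff_subset))
    ENNReal.toReal_nonneg

private lemma tendsto_measure_diff_zero {b₁ b₂ : ℝ} {b₃ : EReal} {w : EReal}
    {μ : Measure ℝ} [IsFiniteMeasure μ] {v₀ : ℝ} {x : ℕ → ℝ}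
    (hmono : Monotone x) (hlim : Tendsto x atTop (𝓝 v₀)) :
    Tendsto (fun n => (μ (condSet b₁ b₂ b₃ (x n) w \ condSet b₁ b₂ b₃ v₀ w)).toReal)
      atTop (𝓝 0) := by
  set B : ℕ → Set ℝ := fun n => condSet b₁ b₂ b₃ (x n) w \ condSet b₁ b₂ b₃ v₀ w with hB
  have hBm : ∀ n, NullMeasurableSet (B n) μ := fun n =>
    ((condSet_measurable b₁ b₂ b₃ (x n) w).diff
      (condSet_measurable b₁ b₂ b₃ v₀ w)).nullMeasurableSet
  have hanti : Antitone B := fun m n hmn =>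
    diff_subset_diff_left (condSet_anti b₁ b₂ b₃ w (hmono hmn))
  have hiInter : ⋂ n, B n = ∅ := by
    rw [eq_empty_iff_forall_notMem]
    intro y hy
    rw [mem_iInter] at hy
    obtain ⟨h01, h02⟩ := hy 0
    rw [mem_condSet_iff] at h01
    have hxy : ∀ n, x n ≤ y := fun n => (mem_condSet_iff.1 (hy n).1).1.1
    exact h02 (mem_condSet_iff.2
      ⟨⟨le_of_tendsto hlim (Eventually.of_forall hxy), h01.1.2⟩, h01.2⟩)
  have h := MeasureTheory.tendsto_measure_iInter_atTop hBm hanti ⟨0, measure_ne_top _ _⟩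
  rw [hiInter, measure_empty] at h
  have h2 := (ENNReal.tendsto_toReal (by simp : (0:ENNReal) ≠ ⊤)).comp h
  exact h2

private lemma G_tendsto {b₁ : ℝ} {G : ℝ → ℝ} (hGc1 : ContinuousOn G (Ico 0 b₁))
    {v : ℝ} (hv : v ∈ Ico (0:ℝ) b₁) {z : ℕ → ℝ} (hz : ∀ n, z n ∈ Ico (0:ℝ) b₁)
    (hzt : Tendsto z atTop (𝓝 v)) :
    Tendsto (fun n => G (z n)) atTop (𝓝 (G v)) :=
  (hGc1 v hv).tendsto.comp
    (tendsto_nhdsWithin_of_tendsto_nhds_of_eventually_within z hzt (Eventually.of_forall hz))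

private lemma tendsto_div_nat (d : ℝ) : Tendsto (fun n : ℕ => d / (n + 1)) atTop (𝓝 0) := by
  have h := tendsto_one_div_add_atTop_nhds_zero_nat.const_mul d
  simpa [div_eq_mul_inv] using h

private lemma monotoneOn_Ico_of {b₁ : ℝ} {G : ℝ → ℝ} (hb1 : 0 < b₁)
    (hG1 : MonotoneOn G (Ioo 0 b₁)) (hGc1 : ContinuousOn G (Ico 0 b₁)) :
    MonotoneOn G (Ico 0 b₁) := by
  intro a ha b hb hab
  rcases eq_or_lt_of_le ha.1 with h0 | h0
  · rcases eq_or_lt_of_le hab with heq | hab'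
    · rw [heq]
    · have ha0 : a = 0 := h0.symm
      subst ha0
      set z : ℕ → ℝ := fun n => b / (n + 1) with hzdef
      have hzpos : ∀ n : ℕ, 0 < z n := fun n => div_pos hab' (by positivity)
      have hzle : ∀ n : ℕ, z n ≤ b := fun n =>
        div_le_self hab'.le (by linarith [Nat.cast_nonneg (α := ℝ) n])
      have hzIco : ∀ n, z n ∈ Ico (0:ℝ) b₁ := fun n =>
        ⟨(hzpos n).le, lt_of_le_of_lt (hzle n) hb.2⟩
      have hGz : ∀ n, G (z n) ≤ G b := fun n =>
        hG1 ⟨hzpos n, lt_of_le_of_lt (hzle n) hb.2⟩ ⟨hab', hb.2⟩ (hzle n)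
      have hGt : Tendsto (fun n => G (z n)) atTop (𝓝 (G 0)) :=
        G_tendsto hGc1 ⟨le_refl 0, hb1⟩ hzIco (tendsto_div_nat b)
      exact le_of_tendsto hGt (Eventually.of_forall hGz)
  · exact hG1 ⟨h0, ha.2⟩ ⟨lt_of_lt_of_le h0 hab, hb.2⟩ hab

private lemma leftLim_eq_self {b₁ : ℝ} {G : ℝ → ℝ} (hGc1 : ContinuousOn G (Ico 0 b₁))
    {v : ℝ} (hv : v ∈ Ioo (0:ℝ) b₁) : Function.leftLim G v = G v := by
  refine leftLim_eq_of_tendsto ?_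
  have h1 : 𝓝[Ioo (0:ℝ) v] v = 𝓝[<] v := nhdsWithin_Ioo_eq_nhdsLT hv.1
  rw [← h1]
  exact (hGc1 v ⟨hv.1.le, hv.2⟩).tendsto.mono_left
    (nhdsWithin_mono v (fun y hy => ⟨hy.1.le, hy.2.trans hv.2⟩))

private lemma H1 {b₁ b₂ : ℝ} {b₃ : EReal} {G : ℝ → ℝ} {μ : Measure ℝ} [IsFiniteMeasure μ]
    {w : EReal} (hb1 : 0 < b₁) (hb₁₂ : b₁ < b₂) (hw : (b₂ : EReal) ≤ w)
    (hGint : Integrable G μ) (hG1 : MonotoneOn G (Ioo 0 b₁)) (hGc1 : ContinuousOn G (Ico 0 b₁))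
    (hμI : μ (Ioo b₁ b₂) ≠ 0)
    {u ε' : ℝ} (hu : 0 < u) (hub : u ≤ b₁) (hε' : 0 ≤ ε')
    (hT : ∀ x : ℝ, 0 < x → x < u → G x - ε' ≤ condT b₁ b₂ b₃ G μ x w)
    {y : ℝ} (hy0 : 0 ≤ y) (hyu : y < u) : G y ≤ condT b₁ b₂ b₃ G μ u w + ε' := by
  have hμS : ∀ v : ℝ, v ≤ b₁ → μ (condSet b₁ b₂ b₃ v w) ≠ 0 := fun v hv h =>
    hμI (measure_mono_null (Ioo_subset_condSet b₃ hv hw) h)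
  have hmIco := monotoneOn_Ico_of hb1 hG1 hGc1
  set T : ℝ → ℝ := fun v => condT b₁ b₂ b₃ G μ v w with hTdef
  set mstar : ℝ := (μ (Ioo b₁ b₂)).toReal with hmstar
  have hmstar0 : 0 < mstar := ENNReal.toReal_pos hμI (measure_ne_top _ _)
  set Mb : ℝ := (∫ t, |G t| ∂μ) / mstar with hMb
  have habs0 : (0:ℝ) ≤ ∫ t, |G t| ∂μ := integral_nonneg fun t => abs_nonneg _
  have hTb : ∀ v : ℝ, v ≤ b₁ → T v ≤ Mb := by
    intro v hv
    have h1 : (∫ t in condSet b₁ b₂ b₃ v w, G t ∂μ) ≤ ∫ t, |G t| ∂μ := by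
      calc (∫ t in condSet b₁ b₂ b₃ v w, G t ∂μ)
          ≤ ∫ t in condSet b₁ b₂ b₃ v w, |G t| ∂μ :=
            setIntegral_mono_on hGint.integrableOn hGint.abs.integrableOn
              (condSet_measurable _ _ _ _ _) (fun t _ => le_abs_self _)
        _ ≤ ∫ t, |G t| ∂μ :=
            integral_mono_measure Measure.restrict_le_self
              (Eventually.of_forall fun t => abs_nonneg _) hGint.abs
    have h2 : mstar ≤ (μ (condSet b₁ b₂ b₃ v w)).toReal :=
      ENNReal.toReal_mono (measure_ne_top _ _) (measure_mono (Ioo_subset_condSet b₃ hv hw))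
    have h3 : (0:ℝ) < (μ (condSet b₁ b₂ b₃ v w)).toReal := lt_of_lt_of_le hmstar0 h2
    have h4 : (∫ t in condSet b₁ b₂ b₃ v w, G t ∂μ) / (μ (condSet b₁ b₂ b₃ v w)).toReal
        ≤ (∫ t, |G t| ∂μ) / (μ (condSet b₁ b₂ b₃ v w)).toReal := by
      rw [div_eq_mul_inv, div_eq_mul_inv]
      exact mul_le_mul_of_nonneg_right h1 (by positivity)
    exact le_trans h4 (div_le_div_of_nonneg_left habs0 hmstar0 h2)
  set c₂ : ℝ := Mb + ε' with hc₂
  have hbound : ∀ z : ℝ, 0 < z → z < u → G z ≤ c₂ := by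
    intro z h0 hz
    have h1 := hT z h0 hz
    have h2 := hTb z (le_trans hz.le hub)
    rw [hc₂]
    linarith
  set x₀ : ℝ := max y (u / 2) with hx₀
  have hx₀u : x₀ < u := max_lt hyu (by linarith)
  have hx₀0 : 0 < x₀ := lt_of_lt_of_le (by linarith) (le_max_right _ _)
  have hyx₀ : y ≤ x₀ := le_max_left _ _
  set d : ℝ := u - x₀ with hd
  have hd0 : 0 < d := by rw [hd]; linarith
  set x : ℕ → ℝ := fun n => u - d / (n + 1) with hx
  have hxlt : ∀ n, x n < u := fun n => sub_lt_self _ (div_pos hd0 (by positivity))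
  have hxge : ∀ n, x₀ ≤ x n := by
    intro n
    have h5 : d / (n + 1) ≤ d := div_le_self hd0.le (by linarith [Nat.cast_nonneg (α := ℝ) n])
    rw [hx]
    simp only [hd] at h5 ⊢
    linarith
  have hx0 : ∀ n, 0 < x n := fun n => lt_of_lt_of_le hx₀0 (hxge n)
  have hxmono : Monotone x := by
    intro m n hmn
    have h1 : (m:ℝ) + 1 ≤ (n:ℝ) + 1 := by
      have := Nat.cast_le (α := ℝ) |>.2 hmn
      linarith
    have h2 := div_le_div_of_nonneg_left hd0.le (by positivity : (0:ℝ) < (m:ℝ) + 1) h1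
    rw [hx]
    simp only
    linarith
  have hxlim : Tendsto x atTop (𝓝 u) := by
    have h := ((tendsto_const_nhds : Tendsto (fun _ : ℕ => u) atTop (𝓝 u)).sub
      (tendsto_div_nat d))
    simpa using h
  have hkeyn : ∀ n : ℕ, G y - ε' +
      (μ (condSet b₁ b₂ b₃ (x n) w \ condSet b₁ b₂ b₃ u w)).toReal
        / (μ (condSet b₁ b₂ b₃ (x n) w)).toReal * (T u - c₂) ≤ T u := by
    intro n
    have hAC : condSet b₁ b₂ b₃ u w ⊆ condSet b₁ b₂ b₃ (x n) w :=
      condSet_anti _ _ _ _ (hxlt n).le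
    have h₂ : ∀ z ∈ condSet b₁ b₂ b₃ (x n) w \ condSet b₁ b₂ b₃ u w, G z ≤ c₂ := by
      intro z hz
      obtain ⟨hz1, hz2, hz3, hz4⟩ := diff_cases hb1 hb₁₂ hub hz
      exact hbound z (lt_of_lt_of_le (hx0 n) hz1) hz2
    have hge : (μ (condSet b₁ b₂ b₃ (x n) w \ condSet b₁ b₂ b₃ u w)).toReal
          / (μ (condSet b₁ b₂ b₃ (x n) w)).toReal * (T u - c₂) ≤ T u - T (x n) :=
      keyK_ge hGint (condSet_measurable _ _ _ _ _) (condSet_measurable _ _ _ _ _)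
        hAC (hμS u hub) h₂
    have h2 : G (x n) - ε' ≤ T (x n) := hT (x n) (hx0 n) (hxlt n)
    have h3 : G y ≤ G (x n) :=
      hmIco ⟨hy0, lt_of_lt_of_le hyu hub⟩ ⟨(hx0 n).le, lt_of_lt_of_le (hxlt n) hub⟩
        (hyx₀.trans (hxge n))
    linarith
  set q : ℕ → ℝ := fun n =>
    (μ (condSet b₁ b₂ b₃ (x n) w \ condSet b₁ b₂ b₃ u w)).toReal
      / (μ (condSet b₁ b₂ b₃ (x n) w)).toReal with hqdef
  have hq0 : Tendsto q atTop (𝓝 0) := by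
    have hnum := tendsto_measure_diff_zero (b₁ := b₁) (b₂ := b₂) (b₃ := b₃) (w := w)
      (μ := μ) (v₀ := u) hxmono hxlim
    apply squeeze_zero (fun n => by positivity)
      (g := fun n => (μ (condSet b₁ b₂ b₃ (x n) w \ condSet b₁ b₂ b₃ u w)).toReal / mstar)
    · intro n
      have hden : mstar ≤ (μ (condSet b₁ b₂ b₃ (x n) w)).toReal :=
        ENNReal.toReal_mono (measure_ne_top _ _)
          (measure_mono (Ioo_subset_condSet b₃ (le_trans (hxlt n).le hub) hw))
      exact div_le_div_of_nonneg_left ENNReal.toReal_nonneg hmstar0 hden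
    · simpa using hnum.div_const mstar
  have hlim2 : Tendsto (fun n => G y - ε' + q n * (T u - c₂)) atTop (𝓝 (G y - ε')) := by
    have h := (hq0.mul_const (T u - c₂)).const_add (G y - ε')
    simpa using h
  have hfinal : G y - ε' ≤ T u := le_of_tendsto hlim2 (Eventually.of_forall hkeyn)
  have : T u = condT b₁ b₂ b₃ G μ u w := rfl
  linarith

private lemma dagger {b₁ b₂ : ℝ} {b₃ : EReal} {G : ℝ → ℝ} {μ : Measure ℝ} [IsFiniteMeasure μ]
    {w : EReal} (hb1 : 0 < b₁) (hb₁₂ : b₁ < b₂) (hw : (b₂ : EReal) ≤ w)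
    (hGint : Integrable G μ) (hG1 : MonotoneOn G (Ioo 0 b₁)) (hμI : μ (Ioo b₁ b₂) ≠ 0)
    {v' u' : ℝ} (hv' : v' ∈ Ioo (0:ℝ) b₁) (hvu : v' ≤ u') (hub : u' ≤ b₁)
    (hTv : condT b₁ b₂ b₃ G μ v' w < G v') : condT b₁ b₂ b₃ G μ u' w < G v' := by
  by_contra hcon
  push_neg at hcon
  have hμS : ∀ v : ℝ, v ≤ b₁ → μ (condSet b₁ b₂ b₃ v w) ≠ 0 := fun v hv h =>
    hμI (measure_mono_null (Ioo_subset_condSet b₃ hv hw) h)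
  have h₁ : ∀ z ∈ condSet b₁ b₂ b₃ v' w \ condSet b₁ b₂ b₃ u' w, G v' ≤ G z := by
    intro z hz
    obtain ⟨hz1, hz2, hz3, hz4⟩ := diff_cases hb1 hb₁₂ hub hz
    exact hG1 hv' ⟨lt_of_lt_of_le hv'.1 hz1, lt_of_lt_of_le hz2 hub⟩ hz1
  have hle : condT b₁ b₂ b₃ G μ u' w - condT b₁ b₂ b₃ G μ v' w
      ≤ (μ (condSet b₁ b₂ b₃ v' w \ condSet b₁ b₂ b₃ u' w)).toReal
          / (μ (condSet b₁ b₂ b₃ v' w)).toReal * (condT b₁ b₂ b₃ G μ u' w - G v') :=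
    keyK_le hGint (condSet_measurable _ _ _ _ _) (condSet_measurable _ _ _ _ _)
      (condSet_anti _ _ _ _ hvu) (hμS u' hub) h₁
  have hq1 := q_le_one μ (condSet b₁ b₂ b₃ u' w) (condSet b₁ b₂ b₃ v' w)
  have h2 : (μ (condSet b₁ b₂ b₃ v' w \ condSet b₁ b₂ b₃ u' w)).toReal
      / (μ (condSet b₁ b₂ b₃ v' w)).toReal * (condT b₁ b₂ b₃ G μ u' w - G v')
      ≤ condT b₁ b₂ b₃ G μ u' w - G v' :=
    mul_le_of_le_one_left (by linarith) hq1
  linarith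

private lemma tendsto_div_nat2 (d : ℝ) : Tendsto (fun n : ℕ => d / (n + 2)) atTop (𝓝 0) := by
  have h := (tendsto_div_nat d).comp (tendsto_add_atTop_nat 1)
  have h2 : (fun n : ℕ => d / (↑(n + 1) + 1)) = fun n : ℕ => d / (↑n + 2) := by
    funext n; push_cast; ring_nf
  rw [show ((fun n : ℕ => d / (↑n + 1)) ∘ fun n => n + 1) = fun n : ℕ => d / (↑(n + 1) + 1)
    from rfl, h2] at h
  exact h

end Aux12

set_option maxHeartbeats 4000000 in
theorem statement12
    (b₁ b₂ : ℝ) (b₃ : EReal) (G : ℝ → ℝ) (μ : Measure ℝ)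
    (hb₁ : 0 ≤ b₁) (hb₁₂ : b₁ < b₂) (hb₂₃ : (b₂ : EReal) < b₃)
    (hμ : IsProbabilityMeasure μ) (hμneg : μ (Iio 0) = 0)
    (hGint : Integrable G μ)
    (hfull : ∀ a b : ℝ, a < b → Ioo a b ⊆ ITset b₁ b₂ b₃ → 0 < μ (Ioo a b))
    (hG1 : MonotoneOn G (Ioo 0 b₁))
    (hG2 : StrictAntiOn G (Icc b₁ b₂))
    (hG3 : MonotoneOn G {y : ℝ | b₂ < y ∧ (y : EReal) < b₃})
    (hGc1 : ContinuousOn G (Ico 0 b₁))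
    (hGc3 : ContinuousOn G {y : ℝ | b₂ < y ∧ (y : EReal) < b₃}) :
    ∀ w : ℝ, b₂ < w → (w : EReal) < b₃ → ∀ ε : ℝ, 0 < ε →
      |condT b₁ b₂ b₃ G μ (vstarR b₁ b₂ b₃ G μ ε (w : EReal)) (w : EReal)
        - condT b₁ b₂ b₃ G μ (vstar b₁ b₂ b₃ G μ (w : EReal)) (w : EReal)| ≤ ε ∧
      |condT b₁ b₂ b₃ G μ (vstarL b₁ b₂ b₃ G μ ε (w : EReal)) (w : EReal)
        - condT b₁ b₂ b₃ G μ (vstar b₁ b₂ b₃ G μ (w : EReal)) (w : EReal)| ≤ ε := by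
  intro w hw2 hw3 ε hε
  classical
  haveI : IsFiniteMeasure μ := by infer_instance
  have hwE : (b₂ : EReal) ≤ (w : EReal) := le_of_lt (EReal.coe_lt_coe_iff.2 hw2)
  rcases eq_or_lt_of_le hb₁ with hb0 | hb1
  · -- degenerate case b₁ = 0
    have hIoo : Ioo (0:ℝ) b₁ = ∅ := by rw [← hb0]; exact Ioo_self 0
    have hVRe : ∀ ε' : ℝ, VR b₁ b₂ b₃ G μ ε' ↑w = ∅ := by
      intro ε'
      rw [eq_empty_iff_forall_notMem]
      intro v hv
      have h1 : v ∈ Ioo (0:ℝ) b₁ := hv.1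
      rw [hIoo] at h1
      exact h1
    have hVLe : VL b₁ b₂ b₃ G μ ε ↑w = ∅ := by
      rw [eq_empty_iff_forall_notMem]
      intro v hv
      have h1 : v ∈ Ioo (0:ℝ) b₁ := hv.1
      rw [hIoo] at h1
      exact h1
    have h1 : vstarR b₁ b₂ b₃ G μ ε ↑w = b₁ := by
      unfold vstarR; rw [hVRe]; exact if_neg (by simp)
    have h2 : vstar b₁ b₂ b₃ G μ ↑w = b₁ := by
      unfold vstar vstarR; rw [hVRe]; exact if_neg (by simp)
    have h3 : vstarL b₁ b₂ b₃ G μ ε ↑w = 0 := by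
      unfold vstarL; rw [hVLe]; exact if_neg (by simp)
    rw [h1, h2, h3, ← hb0]
    constructor
    · rw [sub_self, abs_zero]; exact hε.le
    · rw [sub_self, abs_zero]; exact hε.le
  · -- main case 0 < b₁
    have hμI : μ (Ioo b₁ b₂) ≠ 0 := by
      have h := hfull b₁ b₂ hb₁₂ (fun y hy => Or.inl (Or.inr ⟨hy.1.le, hy.2.le⟩))
      exact h.ne'
    set u := vstarR b₁ b₂ b₃ G μ ε ↑w with hu_def
    set vs := vstar b₁ b₂ b₃ G μ ↑w with hvs_def
    set sL := vstarL b₁ b₂ b₃ G μ ε ↑w with hsL_def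
    set T : ℝ → ℝ := fun v => condT b₁ b₂ b₃ G μ v ↑w with hT
    set V0 := VR b₁ b₂ b₃ G μ 0 ↑w with hV0
    set Vε := VR b₁ b₂ b₃ G μ ε ↑w with hVε
    set VLs := VL b₁ b₂ b₃ G μ ε ↑w with hVLs
    have hμS : ∀ v : ℝ, v ≤ b₁ → μ (condSet b₁ b₂ b₃ v ↑w) ≠ 0 := fun v hv h =>
      hμI (measure_mono_null (Ioo_subset_condSet b₃ hv hwE) h)
    have hmIco := monotoneOn_Ico_of hb1 hG1 hGc1
    have hLL : ∀ v ∈ Ioo (0:ℝ) b₁, Function.leftLim G v = G v := fun v hv =>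
      leftLim_eq_self hGc1 hv
    have hvsR : vs = vstarR b₁ b₂ b₃ G μ 0 ↑w := by rw [hvs_def]; rfl
    have hbddV0 : BddBelow V0 := ⟨0, fun z hz => by
      have h1 : z ∈ Ioo (0:ℝ) b₁ := hz.1
      exact h1.1.le⟩
    have hbddVε : BddBelow Vε := ⟨0, fun z hz => by
      have h1 : z ∈ Ioo (0:ℝ) b₁ := hz.1
      exact h1.1.le⟩
    have hVsub : Vε ⊆ V0 := by
      intro z hz
      have h1 : z ∈ Ioo (0:ℝ) b₁ := hz.1
      have h2 : T z < Function.leftLim G z - ε := hz.2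
      exact ⟨h1, by linarith⟩
    have hvs0 : 0 ≤ vs := by
      rw [hvsR]; unfold vstarR
      split_ifs with h
      · exact le_csInf h (fun z hz => by
          have h1 : z ∈ Ioo (0:ℝ) b₁ := hz.1
          exact h1.1.le)
      · exact hb₁
    have hvsb : vs ≤ b₁ := by
      rw [hvsR]; unfold vstarR
      split_ifs with h
      · obtain ⟨z, hz⟩ := h
        have h1 : z ∈ Ioo (0:ℝ) b₁ := hz.1
        exact (csInf_le hbddV0 hz).trans h1.2.le
      · exact le_refl b₁
    have hub : u ≤ b₁ := by
      rw [hu_def]; unfold vstarR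
      split_ifs with h
      · obtain ⟨z, hz⟩ := h
        have h1 : z ∈ Ioo (0:ℝ) b₁ := hz.1
        exact (csInf_le hbddVε hz).trans h1.2.le
      · exact le_refl b₁
    have hvsu : vs ≤ u := by
      by_cases h2 : Vε.Nonempty
      · have hV0ne : V0.Nonempty := h2.mono hVsub
        have e1 : vs = sInf V0 := by rw [hvsR]; unfold vstarR; exact if_pos hV0ne
        have e2 : u = sInf Vε := by rw [hu_def]; unfold vstarR; exact if_pos h2
        rw [e1, e2]
        exact csInf_le_csInf hbddV0 h2 hVsub
      · have e2 : u = b₁ := by rw [hu_def]; unfold vstarR; exact if_neg h2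
        rw [e2]; exact hvsb
    have hnotVε : ∀ x : ℝ, 0 < x → x < u → G x - ε ≤ T x := by
      intro x h0 hxu
      have hxb : x < b₁ := lt_of_lt_of_le hxu hub
      have hxIoo : x ∈ Ioo (0:ℝ) b₁ := ⟨h0, hxb⟩
      have hx_not : x ∉ Vε := by
        intro hx
        rw [hu_def] at hxu
        unfold vstarR at hxu
        rw [if_pos ⟨x, hx⟩] at hxu
        exact absurd (csInf_le hbddVε hx) (not_le.2 hxu)
      have h2 : ¬ (T x < Function.leftLim G x - ε) := fun hc => hx_not ⟨hxIoo, hc⟩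
      push_neg at h2
      rw [hLL x hxIoo] at h2
      exact h2
    have hnotV0 : ∀ x : ℝ, 0 < x → x < vs → G x ≤ T x := by
      intro x h0 hxu
      have hxb : x < b₁ := lt_of_lt_of_le hxu hvsb
      have hxIoo : x ∈ Ioo (0:ℝ) b₁ := ⟨h0, hxb⟩
      have hx_not : x ∉ V0 := by
        intro hx
        rw [hvsR] at hxu
        unfold vstarR at hxu
        rw [if_pos ⟨x, hx⟩] at hxu
        exact absurd (csInf_le hbddV0 hx) (not_le.2 hxu)
      have h2 : ¬ (T x < Function.leftLim G x - 0) := fun hc => hx_not ⟨hxIoo, hc⟩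
      push_neg at h2
      rw [hLL x hxIoo, sub_zero] at h2
      exact h2
    have hH1vs : 0 < vs → ∀ y : ℝ, 0 ≤ y → y < vs → G y ≤ T vs := by
      intro hvs0' y h1 h2
      have h := H1 hb1 hb₁₂ hwE hGint hG1 hGc1 hμI hvs0' hvsb le_rfl
        (fun x hx1 hx2 => by
          have := hnotV0 x hx1 hx2
          simpa using this) h1 h2
      simpa using h
    have part1 : |T u - T vs| ≤ ε := by
      rcases eq_or_lt_of_le hvsu with heq | hlt
      · rw [heq, sub_self, abs_zero]; exact hε.le
      · have hu0 : 0 < u := lt_of_le_of_lt hvs0 hlt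
        have hvslt : vs < b₁ := lt_of_lt_of_le hlt hub
        have hH1u : ∀ y : ℝ, 0 ≤ y → y < u → G y ≤ T u + ε := fun y h1 h2 =>
          H1 hb1 hb₁₂ hwE hGint hG1 hGc1 hμI hu0 hub hε.le hnotVε h1 h2
        have hge : (μ (condSet b₁ b₂ b₃ vs ↑w \ condSet b₁ b₂ b₃ u ↑w)).toReal
            / (μ (condSet b₁ b₂ b₃ vs ↑w)).toReal * (T u - (T u + ε)) ≤ T u - T vs :=
          keyK_ge hGint (condSet_measurable _ _ _ _ _) (condSet_measurable _ _ _ _ _)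
            (condSet_anti _ _ _ _ hlt.le) (hμS u hub)
            (fun y hy => by
              obtain ⟨h1, h2, h3, h4⟩ := diff_cases hb1 hb₁₂ hub hy
              exact hH1u y h3.1 h2)
        have hq1 := q_le_one μ (condSet b₁ b₂ b₃ u ↑w) (condSet b₁ b₂ b₃ vs ↑w)
        have hq0 : (0:ℝ) ≤ (μ (condSet b₁ b₂ b₃ vs ↑w \ condSet b₁ b₂ b₃ u ↑w)).toReal
            / (μ (condSet b₁ b₂ b₃ vs ↑w)).toReal := by positivity
        have hqe : (μ (condSet b₁ b₂ b₃ vs ↑w \ condSet b₁ b₂ b₃ u ↑w)).toReal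
            / (μ (condSet b₁ b₂ b₃ vs ↑w)).toReal * ε ≤ ε :=
          mul_le_of_le_one_left hε.le hq1
        have claim2 : T vs - ε ≤ T u := by
          rw [show T u - (T u + ε) = -ε by ring, mul_neg] at hge
          linarith [hge, hqe]
        have hV0ne : V0.Nonempty := by
          by_contra h
          have hvb : vs = b₁ := by rw [hvsR]; unfold vstarR; exact if_neg h
          rw [hvb] at hlt
          exact absurd hub (not_le.2 hlt)
        have hvs_eq : vs = sInf V0 := by rw [hvsR]; unfold vstarR; exact if_pos hV0ne
        obtain ⟨vseq, hanti, hvtend, hvmem⟩ := exists_seq_tendsto_sInf hV0ne hbddV0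
        rw [← hvs_eq] at hvtend
        have hTuG : T u ≤ G vs := by
          have hev : ∀ᶠ n in atTop, vseq n < u := hvtend.eventually_lt_const hlt
          have hev2 : ∀ᶠ n in atTop, T u ≤ G (vseq n) := by
            filter_upwards [hev] with n hn
            have hmem := hvmem n
            have hIoo : vseq n ∈ Ioo (0:ℝ) b₁ := hmem.1
            have hTlt : condT b₁ b₂ b₃ G μ (vseq n) ↑w < G (vseq n) := by
              have h2 : T (vseq n) < Function.leftLim G (vseq n) - 0 := hmem.2
              rw [hLL _ hIoo, sub_zero] at h2
              exact h2
            exact (dagger hb1 hb₁₂ hwE hGint hG1 hμI hIoo hn.le hub hTlt).le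
          have hGt : Tendsto (fun n => G (vseq n)) atTop (𝓝 (G vs)) :=
            G_tendsto hGc1 ⟨hvs0, hvslt⟩ (fun n => by
              have hIoo : vseq n ∈ Ioo (0:ℝ) b₁ := (hvmem n).1
              exact ⟨hIoo.1.le, hIoo.2⟩) hvtend
          exact ge_of_tendsto hGt hev2
        rcases eq_or_lt_of_le hvs0 with hvs00 | hvs00
        · -- vs = 0
          have hle : T u - T vs ≤ (μ (condSet b₁ b₂ b₃ vs ↑w \ condSet b₁ b₂ b₃ u ↑w)).toReal
              / (μ (condSet b₁ b₂ b₃ vs ↑w)).toReal * (T u - G vs) :=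
            keyK_le hGint (condSet_measurable _ _ _ _ _) (condSet_measurable _ _ _ _ _)
              (condSet_anti _ _ _ _ hlt.le) (hμS u hub)
              (fun y hy => by
                obtain ⟨h1, h2, h3, h4⟩ := diff_cases hb1 hb₁₂ hub hy
                exact hmIco ⟨hvs0, hvslt⟩ h3 (by rw [← hvs00] at h1 ⊢; exact h3.1))
          rw [abs_le]
          constructor
          · linarith
          · nlinarith [hle, mul_nonneg hq0 (sub_nonneg.2 hTuG)]
        · -- 0 < vs
          have hGvs : G vs ≤ T vs := by
            set z : ℕ → ℝ := fun n => vs - vs / (n + 1) with hzdef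
            have hzlt : ∀ n : ℕ, z n < vs := fun n =>
              sub_lt_self _ (div_pos hvs00 (by positivity))
            have hz0 : ∀ n : ℕ, 0 ≤ z n := by
              intro n
              have h5 : vs / (n+1) ≤ vs :=
                div_le_self hvs00.le (by linarith [Nat.cast_nonneg (α := ℝ) n])
              rw [hzdef]
              simp only
              linarith
            have hzt : Tendsto z atTop (𝓝 vs) := by
              have h := ((tendsto_const_nhds : Tendsto (fun _ : ℕ => vs) atTop (𝓝 vs)).sub
                (tendsto_div_nat vs))
              simpa using h
            have hGz : ∀ n, G (z n) ≤ T vs := fun n => hH1vs hvs00 (z n) (hz0 n) (hzlt n)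
            have hGt : Tendsto (fun n => G (z n)) atTop (𝓝 (G vs)) :=
              G_tendsto hGc1 ⟨hvs0, hvslt⟩
                (fun n => ⟨hz0 n, lt_trans (hzlt n) hvslt⟩) hzt
            exact le_of_tendsto hGt (Eventually.of_forall hGz)
          rw [abs_le]
          exact ⟨by linarith, by linarith⟩
    have part2 : |T sL - T vs| ≤ ε := by
      have hbddVL : BddAbove VLs := ⟨b₁, fun z hz => by
        have h1 : z ∈ Ioo (0:ℝ) b₁ := hz.1
        exact h1.2.le⟩
      by_cases hVLne : VLs.Nonempty
      · -- V_{L,ε} nonempty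
        have hsL_eq : sL = sSup VLs := by rw [hsL_def]; unfold vstarL; exact if_pos hVLne
        obtain ⟨v₁, hv₁⟩ := hVLne
        have hv₁Ioo : v₁ ∈ Ioo (0:ℝ) b₁ := hv₁.1
        have hsL0 : 0 < sL := lt_of_lt_of_le hv₁Ioo.1 (hsL_eq ▸ le_csSup hbddVL hv₁)
        have hsLb : sL ≤ b₁ := hsL_eq ▸ csSup_le ⟨v₁, hv₁⟩ (fun z hz => by
          have h1 : z ∈ Ioo (0:ℝ) b₁ := hz.1
          exact h1.2.le)
        have hstar : ∀ y : ℝ, 0 ≤ y → y < sL → y < b₁ → G y < T vs - ε := by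
          intro y h0 hy hyb
          obtain ⟨v'', hv''m, hv''gt⟩ := exists_lt_of_lt_csSup ⟨v₁, hv₁⟩ (hsL_eq ▸ hy)
          have hv''Ioo : v'' ∈ Ioo (0:ℝ) b₁ := hv''m.1
          have hv''lt : G v'' < T vs - ε := hv''m.2
          exact lt_of_le_of_lt
            (hmIco ⟨h0, hyb⟩ ⟨hv''Ioo.1.le, hv''Ioo.2⟩ hv''gt.le) hv''lt
        have hsLvs : sL ≤ vs := by
          by_contra hcon
          push_neg at hcon
          have hV0ne : V0.Nonempty := by
            by_contra h0
            have hvb : vs = b₁ := by rw [hvsR]; unfold vstarR; exact if_neg h0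
            rw [hvb] at hcon
            exact absurd hsLb (not_le.2 hcon)
          have hvs_eq : vs = sInf V0 := by rw [hvsR]; unfold vstarR; exact if_pos hV0ne
          obtain ⟨v', hv'm, hv'lt⟩ : ∃ v' ∈ V0, v' < sL := by
            by_contra hno
            push_neg at hno
            have : sL ≤ vs := hvs_eq ▸ le_csInf hV0ne hno
            linarith
          have hv'Ioo : v' ∈ Ioo (0:ℝ) b₁ := hv'm.1
          have hTv' : condT b₁ b₂ b₃ G μ v' ↑w < G v' := by
            have h2 : T v' < Function.leftLim G v' - 0 := hv'm.2
            rw [hLL _ hv'Ioo, sub_zero] at h2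
            exact h2
          have hTs_lt : T sL < G v' :=
            dagger hb1 hb₁₂ hwE hGint hG1 hμI hv'Ioo hv'lt.le hsLb hTv'
          have hGv' : G v' < T vs - ε := hstar v' hv'Ioo.1.le hv'lt hv'Ioo.2
          have hge2 : (μ (condSet b₁ b₂ b₃ vs ↑w \ condSet b₁ b₂ b₃ sL ↑w)).toReal
              / (μ (condSet b₁ b₂ b₃ vs ↑w)).toReal * (T sL - (T vs - ε)) ≤ T sL - T vs :=
            keyK_ge hGint (condSet_measurable _ _ _ _ _) (condSet_measurable _ _ _ _ _)
              (condSet_anti _ _ _ _ hcon.le) (hμS sL hsLb)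
              (fun y hy => by
                obtain ⟨h1, h2, h3, h4⟩ := diff_cases hb1 hb₁₂ hsLb hy
                exact (hstar y h3.1 h2 h3.2).le)
          have hq1 := q_le_one μ (condSet b₁ b₂ b₃ sL ↑w) (condSet b₁ b₂ b₃ vs ↑w)
          have hq0 : (0:ℝ) ≤ (μ (condSet b₁ b₂ b₃ vs ↑w \ condSet b₁ b₂ b₃ sL ↑w)).toReal
              / (μ (condSet b₁ b₂ b₃ vs ↑w)).toReal := by positivity
          rw [show T sL - (T vs - ε) = (T sL - T vs) + ε by ring] at hge2
          have hX : (T sL - T vs) + ε ≤ 0 := by linarith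
          have h5 : (T sL - T vs) + ε ≤ (μ (condSet b₁ b₂ b₃ vs ↑w \ condSet b₁ b₂ b₃ sL ↑w)).toReal
              / (μ (condSet b₁ b₂ b₃ vs ↑w)).toReal * ((T sL - T vs) + ε) := by
            nlinarith [mul_nonneg (sub_nonneg.2 hq1) (neg_nonneg.2 hX)]
          linarith [hge2, h5, hε]
        rcases eq_or_lt_of_le hsLvs with heq | hlt2
        · rw [heq, sub_self, abs_zero]; exact hε.le
        · have hvs00 : 0 < vs := lt_trans hsL0 hlt2
          have hsLb1 : sL < b₁ := lt_of_lt_of_le hlt2 hvsb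
          have h₂b : ∀ y ∈ condSet b₁ b₂ b₃ sL ↑w \ condSet b₁ b₂ b₃ vs ↑w, G y ≤ T vs := by
            intro y hy
            obtain ⟨h1, h2, h3, h4⟩ := diff_cases hb1 hb₁₂ hvsb hy
            exact hH1vs hvs00 y h3.1 h2
          have h₁b : ∀ y ∈ condSet b₁ b₂ b₃ sL ↑w \ condSet b₁ b₂ b₃ vs ↑w,
              T vs - ε ≤ G y := by
            intro y hy
            obtain ⟨h1, h2, h3, h4⟩ := diff_cases hb1 hb₁₂ hvsb hy
            have hnotmem : ∀ x : ℝ, x ∈ Ioo (0:ℝ) b₁ → sL < x → T vs - ε ≤ G x := by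
              intro x hxIoo hxgt
              have hxnot : x ∉ VLs := fun hmem =>
                absurd (hsL_eq ▸ le_csSup hbddVL hmem) (not_le.2 hxgt)
              by_contra hc
              push_neg at hc
              exact hxnot ⟨hxIoo, hc⟩
            rcases eq_or_lt_of_le h1 with heq0 | hlt0
            · -- y = sL : right-continuity at sL
              rw [← heq0]
              set z : ℕ → ℝ := fun n => sL + (vs - sL) / (n + 2) with hz
              have hz1 : ∀ n : ℕ, sL < z n := fun n =>
                lt_add_of_pos_right _ (div_pos (by linarith) (by positivity))
              have hz2 : ∀ n : ℕ, z n < vs := by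
                intro n
                have h5 : (vs - sL) / (n + 2) < vs - sL :=
                  div_lt_self (by linarith) (by linarith [Nat.cast_nonneg (α := ℝ) n])
                rw [hz]
                simp only
                linarith
              have hznot : ∀ n, T vs - ε ≤ G (z n) := fun n =>
                hnotmem (z n) ⟨lt_trans hsL0 (hz1 n), lt_of_lt_of_le (hz2 n) hvsb⟩ (hz1 n)
              have hzt : Tendsto z atTop (𝓝 sL) := by
                have h := ((tendsto_const_nhds : Tendsto (fun _ : ℕ => sL) atTop (𝓝 sL)).add
                  (tendsto_div_nat2 (vs - sL)))
                simpa using h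
              have hGt : Tendsto (fun n => G (z n)) atTop (𝓝 (G sL)) :=
                G_tendsto hGc1 ⟨hsL0.le, hsLb1⟩
                  (fun n => ⟨(lt_trans hsL0 (hz1 n)).le, lt_of_lt_of_le (hz2 n) hvsb⟩) hzt
              exact ge_of_tendsto hGt (Eventually.of_forall hznot)
            · exact hnotmem y (h4 (lt_trans hsL0 hlt0)) hlt0
          have hge3 : (μ (condSet b₁ b₂ b₃ sL ↑w \ condSet b₁ b₂ b₃ vs ↑w)).toReal
              / (μ (condSet b₁ b₂ b₃ sL ↑w)).toReal * (T vs - T vs) ≤ T vs - T sL :=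
            keyK_ge hGint (condSet_measurable _ _ _ _ _) (condSet_measurable _ _ _ _ _)
              (condSet_anti _ _ _ _ hlt2.le) (hμS vs hvsb) h₂b
          have hle3 : T vs - T sL ≤ (μ (condSet b₁ b₂ b₃ sL ↑w \ condSet b₁ b₂ b₃ vs ↑w)).toReal
              / (μ (condSet b₁ b₂ b₃ sL ↑w)).toReal * (T vs - (T vs - ε)) :=
            keyK_le hGint (condSet_measurable _ _ _ _ _) (condSet_measurable _ _ _ _ _)
              (condSet_anti _ _ _ _ hlt2.le) (hμS vs hvsb) h₁b
          have hq1 := q_le_one μ (condSet b₁ b₂ b₃ vs ↑w) (condSet b₁ b₂ b₃ sL ↑w)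
          have hqe : (μ (condSet b₁ b₂ b₃ sL ↑w \ condSet b₁ b₂ b₃ vs ↑w)).toReal
              / (μ (condSet b₁ b₂ b₃ sL ↑w)).toReal * ε ≤ ε :=
            mul_le_of_le_one_left hε.le hq1
          rw [sub_self, mul_zero] at hge3
          rw [show T vs - (T vs - ε) = ε by ring] at hle3
          rw [abs_le]
          constructor
          · linarith [hle3, hqe]
          · linarith [hge3, hε.le]
      · -- V_{L,ε} empty
        have hsL_eq : sL = 0 := by rw [hsL_def]; unfold vstarL; exact if_neg hVLne
        rcases eq_or_lt_of_le hvs0 with hvs00 | hvs00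
        · rw [hsL_eq, ← hvs00, sub_self, abs_zero]; exact hε.le
        · have hnotVL : ∀ x : ℝ, x ∈ Ioo (0:ℝ) b₁ → T vs - ε ≤ G x := by
            intro x hx
            by_contra hc
            push_neg at hc
            exact hVLne ⟨x, ⟨hx, hc⟩⟩
          have h₂b : ∀ y ∈ condSet b₁ b₂ b₃ 0 ↑w \ condSet b₁ b₂ b₃ vs ↑w, G y ≤ T vs := by
            intro y hy
            obtain ⟨h1, h2, h3, h4⟩ := diff_cases hb1 hb₁₂ hvsb hy
            exact hH1vs hvs00 y h3.1 h2
          have h₁b : ∀ y ∈ condSet b₁ b₂ b₃ 0 ↑w \ condSet b₁ b₂ b₃ vs ↑w,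
              T vs - ε ≤ G y := by
            intro y hy
            obtain ⟨h1, h2, h3, h4⟩ := diff_cases hb1 hb₁₂ hvsb hy
            rcases eq_or_lt_of_le h3.1 with h0 | h0
            · rw [← h0]
              set z : ℕ → ℝ := fun n => vs / (n + 2) with hz
              have hz1 : ∀ n : ℕ, 0 < z n := fun n => div_pos hvs00 (by positivity)
              have hz2 : ∀ n : ℕ, z n < vs := fun n =>
                div_lt_self hvs00 (by linarith [Nat.cast_nonneg (α := ℝ) n])
              have hznot : ∀ n, T vs - ε ≤ G (z n) := fun n =>
                hnotVL (z n) ⟨hz1 n, lt_of_lt_of_le (hz2 n) hvsb⟩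
              have hGt : Tendsto (fun n => G (z n)) atTop (𝓝 (G 0)) :=
                G_tendsto hGc1 ⟨le_refl 0, hb1⟩
                  (fun n => ⟨(hz1 n).le, lt_of_lt_of_le (hz2 n) hvsb⟩) (tendsto_div_nat2 vs)
              exact ge_of_tendsto hGt (Eventually.of_forall hznot)
            · exact hnotVL y (h4 h0)
          have hge3 : (μ (condSet b₁ b₂ b₃ 0 ↑w \ condSet b₁ b₂ b₃ vs ↑w)).toReal
              / (μ (condSet b₁ b₂ b₃ 0 ↑w)).toReal * (T vs - T vs) ≤ T vs - T 0 :=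
            keyK_ge hGint (condSet_measurable _ _ _ _ _) (condSet_measurable _ _ _ _ _)
              (condSet_anti _ _ _ _ hvs0) (hμS vs hvsb) h₂b
          have hle3 : T vs - T 0 ≤ (μ (condSet b₁ b₂ b₃ 0 ↑w \ condSet b₁ b₂ b₃ vs ↑w)).toReal
              / (μ (condSet b₁ b₂ b₃ 0 ↑w)).toReal * (T vs - (T vs - ε)) :=
            keyK_le hGint (condSet_measurable _ _ _ _ _) (condSet_measurable _ _ _ _ _)
              (condSet_anti _ _ _ _ hvs0) (hμS vs hvsb) h₁b
          have hq1 := q_le_one μ (condSet b₁ b₂ b₃ vs ↑w) (condSet b₁ b₂ b₃ 0 ↑w)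
          have hqe : (μ (condSet b₁ b₂ b₃ 0 ↑w \ condSet b₁ b₂ b₃ vs ↑w)).toReal
              / (μ (condSet b₁ b₂ b₃ 0 ↑w)).toReal * ε ≤ ε :=
            mul_le_of_le_one_left hε.le hq1
          rw [sub_self, mul_zero] at hge3
          rw [show T vs - (T vs - ε) = ε by ring] at hle3
          rw [hsL_eq, abs_le]
          constructor
          · linarith [hle3, hqe]
          · linarith [hge3, hε.le]
    exact ⟨part1, part2⟩
end
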